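/- arXiv:0810.1539 — 6 statements merged into one kernel-verified Lean document; each statement's English description precedes it below -/
import Mathlib

section
/- Let Δ be a (d−1)-dimensional simplicial complex with d ≥ 2 that is pure and such that lk_Δ F is connected for every face F ∈ Δ with 0 ≤ |F| < d−1 (including the empty face). Then Δ is strongly connected: for any two facets F and F′ of Δ there is a chain of facets F = F_0, F_1, …, F_m = F′ such that |F_i ∩ F_{i+1}| = d−1 for all 0 ≤ i ≤ m−1. -/
/-- `Δ` is an (abstract) simplicial complex on the (finite) vertex set `V`:
faces are closed under taking subsets and every singleton is a face. -/
def IsComplex {V : Type*} [DecidableEq V] (Δ : Set (Finset V)) : Prop :=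
  (∀ F ∈ Δ, ∀ G, G ⊆ F → G ∈ Δ) ∧ ∀ v : V, ({v} : Finset V) ∈ Δ

/-- `F` is a facet (maximal face) of the collection of faces `Δ`. -/
def IsFacet {V : Type*} (Δ : Set (Finset V)) (F : Finset V) : Prop :=
  F ∈ Δ ∧ ∀ G ∈ Δ, F ⊆ G → G = F

/-- Every facet has `d` vertices, i.e. dimension `d - 1`. -/
def IsPure {V : Type*} (Δ : Set (Finset V)) (d : ℕ) : Prop :=
  ∀ F, IsFacet Δ F → F.card = d

/-- `Δ` has dimension `d - 1`: all faces have at most `d` vertices and some face has `d`. -/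
def HasDim {V : Type*} (Δ : Set (Finset V)) (d : ℕ) : Prop :=
  (∀ F ∈ Δ, F.card ≤ d) ∧ ∃ F ∈ Δ, F.card = d

/-- The link of the face `F`. -/
def link {V : Type*} [DecidableEq V] (Δ : Set (Finset V)) (F : Finset V) : Set (Finset V) :=
  {G | G ∈ Δ ∧ Disjoint F G ∧ F ∪ G ∈ Δ}

/-- The closed star of the face `F`. -/
def closedStar {V : Type*} [DecidableEq V] (Δ : Set (Finset V)) (F : Finset V) :
    Set (Finset V) :=
  {G | G ∈ Δ ∧ F ∪ G ∈ Δ}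

/-- The collection of faces `K` is connected: any two of its vertices are joined by a
walk along its `1`-dimensional faces. -/
def Conn {V : Type*} [DecidableEq V] (K : Set (Finset V)) : Prop :=
  ∀ v w : V, ({v} : Finset V) ∈ K → ({w} : Finset V) ∈ K →
    Relation.ReflTransGen (fun a b => ({a, b} : Finset V) ∈ K) v w

/-- Property (III): the link of every face with fewer than `d - 1` vertices
(including the empty face) is connected. -/
def LinksConn {V : Type*} [DecidableEq V] (Δ : Set (Finset V)) (d : ℕ) : Prop :=
  ∀ F ∈ Δ, F.card < d - 1 → Conn (link Δ F)

/-- Property (II): `Δ` is balanced with respect to the coloring `κ`: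
the coloring is injective on every face. -/
def IsBalanced {V : Type*} {d : ℕ} (Δ : Set (Finset V)) (κ : V → Fin d) : Prop :=
  ∀ F ∈ Δ, Set.InjOn κ ↑F

/-- The rank-selected subcomplex `Δ_S`. -/
def rankSel {V : Type*} {d : ℕ} (Δ : Set (Finset V)) (κ : V → Fin d) (S : Finset (Fin d)) :
    Set (Finset V) :=
  {F | F ∈ Δ ∧ ∀ v ∈ F, κ v ∈ S}

/-- `Δ` is strongly connected: any two facets are joined by a chain of facets
in which consecutive facets share `d - 1` vertices. -/
def StronglyConnected {V : Type*} [DecidableEq V] (Δ : Set (Finset V)) (d : ℕ) : Prop :=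
  ∀ F F', IsFacet Δ F → IsFacet Δ F' →
    Relation.ReflTransGen
      (fun A B => IsFacet Δ A ∧ IsFacet Δ B ∧ (A ∩ B).card = d - 1) F F'

section Aux

variable {V : Type*} [DecidableEq V]

/-- Every face is contained in a facet (on a finite vertex set). -/
lemma exists_facet_superset [Fintype V] (Δ : Set (Finset V)) (G : Finset V) (hG : G ∈ Δ) :
    ∃ H, IsFacet Δ H ∧ G ⊆ H := by
  obtain ⟨H, ⟨hH, hGH⟩, hmax⟩ := Set.Finite.exists_maximalFor Finset.card
    {H | H ∈ Δ ∧ G ⊆ H} (Set.toFinite _) ⟨G, hG, subset_rfl⟩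
  refine ⟨H, ⟨hH, fun K hK hHK => ?_⟩, hGH⟩
  exact (Finset.eq_of_subset_of_card_le hHK
    (hmax (j := K) ⟨hK, hGH.trans hHK⟩ (Finset.card_le_card hHK))).symm

variable (Δ : Set (Finset V))

lemma link_dc (hdc : ∀ F ∈ Δ, ∀ G, G ⊆ F → G ∈ Δ) (F : Finset V) :
    ∀ G ∈ link Δ F, ∀ G', G' ⊆ G → G' ∈ link Δ F := by
  rintro G ⟨hG, hdis, hun⟩ G' h
  exact ⟨hdc G hG G' h, hdis.mono_right h,
    hdc _ hun _ (Finset.union_subset_union_right h)⟩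

lemma erase_facet_link (hdc : ∀ F ∈ Δ, ∀ G, G ⊆ F → G ∈ Δ) (v : V) (F : Finset V) (hF : IsFacet Δ F) (hv : v ∈ F) :
    IsFacet (link Δ {v}) (F.erase v) := by
  constructor
  · refine ⟨hdc F hF.1 _ (Finset.erase_subset _ _), ?_, ?_⟩
    · simp [Finset.disjoint_singleton_left]
    · have : {v} ∪ F.erase v = F := by
        rw [← Finset.insert_eq, Finset.insert_erase hv]
      rw [this]; exact hF.1
  · rintro K ⟨hK, hKdis, hKun⟩ hsub
    have hvK : v ∉ K := by
      rw [Finset.disjoint_singleton_left] at hKdis; exact hKdis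
    have h1 : F ⊆ {v} ∪ K := by
      intro x hx
      rcases eq_or_ne x v with rfl | hne
      · simp
      · exact Finset.mem_union_right _ (hsub (Finset.mem_erase.mpr ⟨hne, hx⟩))
    have h2 : {v} ∪ K = F := hF.2 _ hKun h1
    apply Finset.Subset.antisymm
    · intro x hx
      refine Finset.mem_erase.mpr ⟨fun h => hvK (h ▸ hx), ?_⟩
      rw [← h2]; exact Finset.mem_union_right _ hx
    · exact hsub

lemma insert_facet_of_link_facet (hdc : ∀ F ∈ Δ, ∀ G, G ⊆ F → G ∈ Δ) (v : V) (A : Finset V)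
    (hA : IsFacet (link Δ {v}) A) : IsFacet Δ (insert v A) := by
  obtain ⟨⟨hAΔ, hAdis, hAun⟩, hAmax⟩ := hA
  have hins : insert v A = {v} ∪ A := Finset.insert_eq v A
  constructor
  · rw [hins]; exact hAun
  · intro K hK hsub
    have hvK : v ∈ K := hsub (Finset.mem_insert_self _ _)
    have hKe : K.erase v ∈ link Δ {v} := by
      refine ⟨hdc K hK _ (Finset.erase_subset _ _), ?_, ?_⟩
      · simp [Finset.disjoint_singleton_left]
      · rw [← Finset.insert_eq, Finset.insert_erase hvK]; exact hK
    have hAe : A ⊆ K.erase v := by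
      intro x hx
      refine Finset.mem_erase.mpr ⟨fun h => ?_, hsub (Finset.mem_insert_of_mem hx)⟩
      · subst h; exact (Finset.disjoint_singleton_left.mp hAdis) hx
    have := hAmax _ hKe hAe
    rw [← Finset.insert_erase hvK, this]

lemma link_link (hdc : ∀ F ∈ Δ, ∀ G, G ⊆ F → G ∈ Δ) (v : V) (F : Finset V) (hF : F ∈ link Δ {v}) :
    link (link Δ {v}) F = link Δ (insert v F) := by
  obtain ⟨hFΔ, hFdis, hFun⟩ := hF
  have hvF : v ∉ F := Finset.disjoint_singleton_left.mp hFdis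
  ext G
  constructor
  · rintro ⟨⟨hGΔ, hGdis, hGun⟩, hdis, hFGΔ, hFGdis, hFGun⟩
    refine ⟨hGΔ, ?_, ?_⟩
    · rw [Finset.disjoint_insert_left]
      exact ⟨Finset.disjoint_singleton_left.mp hGdis, hdis⟩
    · have : insert v F ∪ G = {v} ∪ (F ∪ G) := by
        rw [Finset.insert_eq, Finset.union_assoc]
      rw [this]; exact hFGun
  · rintro ⟨hGΔ, hdis, hun⟩
    rw [Finset.disjoint_insert_left] at hdis
    obtain ⟨hvG, hFG⟩ := hdis
    have heq : insert v F ∪ G = {v} ∪ (F ∪ G) := by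
      rw [Finset.insert_eq, Finset.union_assoc]
    rw [heq] at hun
    refine ⟨⟨hGΔ, by simp [Finset.disjoint_singleton_left, hvG], ?_⟩, hFG,
      hdc _ hun _ Finset.subset_union_right, ?_, ?_⟩
    · exact hdc _ hun _ (Finset.union_subset_union_right Finset.subset_union_right)
    · rw [Finset.disjoint_singleton_left]
      simp [hvF, hvG]
    · exact hun

end Aux

/-- From connectivity of `Δ` and the fact that facets sharing a vertex are chained,
any two facets are chained. -/
lemma chain_of_claimA {V : Type*} [Fintype V] [DecidableEq V] (d : ℕ) (hd : 2 ≤ d)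
    (Δ : Set (Finset V)) (hdc : ∀ F ∈ Δ, ∀ G, G ⊆ F → G ∈ Δ)
    (hpure : IsPure Δ d) (hIII : LinksConn Δ d)
    (claimA : ∀ (v : V) (F F' : Finset V), IsFacet Δ F → IsFacet Δ F' →
      v ∈ F → v ∈ F' →
      Relation.ReflTransGen
        (fun A B => IsFacet Δ A ∧ IsFacet Δ B ∧ (A ∩ B).card = d - 1) F F') :
    ∀ F F', IsFacet Δ F → IsFacet Δ F' →
      Relation.ReflTransGen
        (fun A B => IsFacet Δ A ∧ IsFacet Δ B ∧ (A ∩ B).card = d - 1) F F' := by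
  intro F F' hF hF'
  have hFne : F.Nonempty := Finset.card_pos.mp (by rw [hpure F hF]; omega)
  have hF'ne : F'.Nonempty := Finset.card_pos.mp (by rw [hpure F' hF']; omega)
  obtain ⟨v, hv⟩ := hFne
  obtain ⟨v', hv'⟩ := hF'ne
  have hempty : (∅ : Finset V) ∈ Δ := hdc F hF.1 ∅ (Finset.empty_subset _)
  have hconn : Conn (link Δ ∅) := hIII ∅ hempty (by simp only [Finset.card_empty]; omega)
  have hmem : ∀ w : V, w ∈ F ∨ w ∈ F' → ({w} : Finset V) ∈ link Δ ∅ := by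
    intro w hw
    have hwΔ : ({w} : Finset V) ∈ Δ := by
      rcases hw with hw | hw
      · exact hdc F hF.1 {w} (Finset.singleton_subset_iff.mpr hw)
      · exact hdc F' hF'.1 {w} (Finset.singleton_subset_iff.mpr hw)
    exact ⟨hwΔ, Finset.disjoint_empty_left _, by simpa using hwΔ⟩
  have hwalk := hconn v v' (hmem v (Or.inl hv)) (hmem v' (Or.inr hv'))
  have key : ∀ w, Relation.ReflTransGen
      (fun a b => ({a, b} : Finset V) ∈ link Δ ∅) v w →
      ∃ G, IsFacet Δ G ∧ w ∈ G ∧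
        Relation.ReflTransGen
          (fun A B => IsFacet Δ A ∧ IsFacet Δ B ∧ (A ∩ B).card = d - 1) F G := by
    intro w hw
    induction hw with
    | refl => exact ⟨F, hF, hv, Relation.ReflTransGen.refl⟩
    | @tail b c hab h ih =>
      obtain ⟨G, hG, hbG, hchain⟩ := ih
      obtain ⟨H, hH, hsub⟩ := exists_facet_superset Δ _ h.1
      have hbH : b ∈ H := hsub (by simp)
      have hcH : c ∈ H := hsub (by simp)
      exact ⟨H, hH, hcH, hchain.trans (claimA b G H hG hH hbG hbH)⟩
  obtain ⟨G, hG, hv'G, hchain⟩ := key v' hwalk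
  exact hchain.trans (claimA v' G F' hG hF' hv'G hv')

/-- Main induction: strong connectivity for pure complexes of dimension `n+1`
(i.e. `d = n + 2`) with connected links. -/
lemma aux_strong {V : Type*} [Fintype V] [DecidableEq V] :
    ∀ n : ℕ, ∀ Δ : Set (Finset V),
      (∀ F ∈ Δ, ∀ G, G ⊆ F → G ∈ Δ) → IsPure Δ (n + 2) → LinksConn Δ (n + 2) →
      ∀ F F', IsFacet Δ F → IsFacet Δ F' →
        Relation.ReflTransGen
          (fun A B => IsFacet Δ A ∧ IsFacet Δ B ∧ (A ∩ B).card = n + 1) F F' := by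
  intro n
  induction n with
  | zero =>
    intro Δ hdc hpure hIII
    refine chain_of_claimA 2 le_rfl Δ hdc hpure hIII ?_
    intro v F F' hF hF' hv hv'
    rcases eq_or_ne F F' with rfl | hne
    · exact Relation.ReflTransGen.refl
    · refine Relation.ReflTransGen.single ⟨hF, hF', ?_⟩
      have h1 : 1 ≤ (F ∩ F').card :=
        Finset.card_pos.mpr ⟨v, Finset.mem_inter.mpr ⟨hv, hv'⟩⟩
      have h2 : (F ∩ F').card ≤ 2 := by
        have := Finset.card_le_card (Finset.inter_subset_left : F ∩ F' ⊆ F)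
        rw [hpure F hF] at this; exact this
      have h3 : (F ∩ F').card ≠ 2 := by
        intro h
        have hFeq : F ∩ F' = F := Finset.eq_of_subset_of_card_le
          Finset.inter_subset_left (by rw [hpure F hF, h])
        have hsub : F ⊆ F' := by rw [← hFeq]; exact Finset.inter_subset_right
        exact hne (hF.2 F' hF'.1 hsub).symm
      omega
  | succ n ih =>
    intro Δ hdc hpure hIII
    refine chain_of_claimA (n + 3) (by omega) Δ hdc hpure hIII ?_
    intro v F F' hF hF' hv hv'
    set Δ' := link Δ {v} with hΔ'
    have hdc' : ∀ F ∈ Δ', ∀ G, G ⊆ F → G ∈ Δ' := link_dc Δ hdc {v}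
    have hvmem : ∀ A ∈ Δ', v ∉ A := by
      rintro A ⟨_, hdis, _⟩
      exact Finset.disjoint_singleton_left.mp hdis
    have hpure' : IsPure Δ' (n + 2) := by
      intro A hA
      have hfac : IsFacet Δ (insert v A) := insert_facet_of_link_facet Δ hdc v A hA
      have hcard := hpure _ hfac
      rw [Finset.card_insert_of_notMem (hvmem A hA.1)] at hcard
      omega
    have hIII' : LinksConn Δ' (n + 2) := by
      intro G hG hGcard
      rw [hΔ', link_link Δ hdc v G hG]
      refine hIII (insert v G) ?_ ?_
      · obtain ⟨_, _, hun⟩ := hG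
        rwa [Finset.insert_eq]
      · rw [Finset.card_insert_of_notMem (hvmem G hG)]
        omega
    have hchain := ih Δ' hdc' hpure' hIII' (F.erase v) (F'.erase v)
      (erase_facet_link Δ hdc v F hF hv) (erase_facet_link Δ hdc v F' hF' hv')
    have hlift : Relation.ReflTransGen
        (fun A B => IsFacet Δ A ∧ IsFacet Δ B ∧ (A ∩ B).card = n + 2)
        (insert v (F.erase v)) (insert v (F'.erase v)) :=
      Relation.ReflTransGen.lift (insert v)
      (fun A B hAB => by
        obtain ⟨hA, hB, hcard⟩ := hAB
        refine ⟨insert_facet_of_link_facet Δ hdc v A hA,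
          insert_facet_of_link_facet Δ hdc v B hB, ?_⟩
        have hint : insert v A ∩ insert v B = insert v (A ∩ B) := by
          ext x; simp [Finset.mem_inter]; tauto
        rw [hint, Finset.card_insert_of_notMem
          (fun h => hvmem A hA.1 (Finset.mem_inter.mp h).1), hcard]) _ _ hchain
    rwa [Finset.insert_erase hv, Finset.insert_erase hv'] at hlift

/-- A pure `(d-1)`-dimensional simplicial complex, `d ≥ 2`, all of
whose links of faces with fewer than `d - 1` vertices (including the empty face) are
connected, is strongly connected: any two facets are joined by a chain of facets in
which consecutive facets share `d - 1` vertices. -/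
theorem stronglyConnected_of_linksConn {V : Type*} [Fintype V] [DecidableEq V] (d : ℕ)
    (hd : 2 ≤ d) (Δ : Set (Finset V))
    (hcplx : IsComplex Δ) (hdim : HasDim Δ d)
    (hI : IsPure Δ d) (hIII : LinksConn Δ d) :
    StronglyConnected Δ d := by
  obtain ⟨n, rfl⟩ : ∃ n, d = n + 2 := ⟨d - 2, by omega⟩
  exact aux_strong n Δ hcplx.1 hI hIII
end

section
/- Let Δ be a (d−1)-dimensional simplicial complex with d ≥ 2 that is pure and such that lk_Δ F is connected for every face F ∈ Δ with 0 ≤ |F| < d−1 (including the empty face). Then for every face σ ∈ Δ, the closed star st̄_Δ σ is strongly connected: for any two facets F and F′ of st̄_Δ σ there is a chain of facets F = F_0, F_1, …, F_m = F′ of st̄_Δ σ such that |F_i ∩ F_{i+1}| = d−1 for all i. -/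
lemma exists_facet {V : Type*} [Fintype V] [DecidableEq V] (Δ : Set (Finset V))
    (F : Finset V) (hF : F ∈ Δ) : ∃ G, IsFacet Δ G ∧ F ⊆ G := by
  obtain ⟨G, hG, hmax⟩ := Set.Finite.exists_maximalFor (fun G : Finset V => G.card)
    {G | G ∈ Δ ∧ F ⊆ G} (Set.toFinite _) ⟨F, hF, subset_rfl⟩
  refine ⟨G, ⟨hG.1, fun H hH hGH => ?_⟩, hG.2⟩
  exact (Finset.eq_of_subset_of_card_le hGH
    (hmax ⟨hH, hG.2.trans hGH⟩ (Finset.card_le_card hGH))).symm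

lemma isFacet_closedStar_iff {V : Type*} [DecidableEq V] (Δ : Set (Finset V))
    (hcplx : IsComplex Δ) (σ : Finset V) (G : Finset V) :
    IsFacet (closedStar Δ σ) G ↔ IsFacet Δ G ∧ σ ⊆ G := by
  constructor
  · rintro ⟨⟨hGΔ, hσG⟩, hmax⟩
    have h1 : σ ∪ G ∈ closedStar Δ σ :=
      ⟨hσG, by rwa [← Finset.union_assoc, Finset.union_self]⟩
    have h2 : σ ∪ G = G := hmax (σ ∪ G) h1 Finset.subset_union_right
    have hσsub : σ ⊆ G := by rw [← h2]; exact Finset.subset_union_left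
    refine ⟨⟨hGΔ, fun H hH hGH => hmax H ⟨hH, ?_⟩ hGH⟩, hσsub⟩
    rwa [Finset.union_eq_right.mpr (hσsub.trans hGH)]
  · rintro ⟨⟨hGΔ, hmax⟩, hσG⟩
    exact ⟨⟨hGΔ, by rwa [Finset.union_eq_right.mpr hσG]⟩,
      fun H hH hGH => hmax H hH.1 hGH⟩

/-- If `Δ` is a pure `(d-1)`-dimensional simplicial complex, `d ≥ 2`,
all of whose links of faces with fewer than `d - 1` vertices (including the empty face)
are connected, then the closed star of every face of `Δ` is strongly connected. -/
theorem closedStar_stronglyConnected {V : Type*} [Fintype V] [DecidableEq V] (d : ℕ)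
    (hd : 2 ≤ d) (Δ : Set (Finset V))
    (hcplx : IsComplex Δ) (hdim : HasDim Δ d)
    (hI : IsPure Δ d) (hIII : LinksConn Δ d)
    (σ : Finset V) (hσ : σ ∈ Δ) :
    StronglyConnected (closedStar Δ σ) d := by
  suffices h : ∀ n : ℕ, ∀ σ ∈ Δ, d - σ.card ≤ n → StronglyConnected (closedStar Δ σ) d from
    h d σ hσ (Nat.sub_le _ _)
  intro n
  induction n with
  | zero =>
    intro σ hσ hn F F' hF hF'
    rw [isFacet_closedStar_iff Δ hcplx σ] at hF hF'
    have hcd : d ≤ σ.card := by omega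
    have h1 : F = σ := (Finset.eq_of_subset_of_card_le hF.2 (by rw [hI F hF.1]; exact hcd)).symm
    have h2 : F' = σ := (Finset.eq_of_subset_of_card_le hF'.2 (by rw [hI F' hF'.1]; exact hcd)).symm
    rw [h1, h2]
  | succ n IH =>
    intro σ hσ hn F F' hF hF'
    rw [isFacet_closedStar_iff Δ hcplx σ] at hF hF'
    have hFd := hI F hF.1
    have hF'd := hI F' hF'.1
    by_cases hcard : d - 1 ≤ σ.card
    · by_cases hFF : F = F'
      · rw [hFF]
      · refine Relation.ReflTransGen.single ⟨(isFacet_closedStar_iff Δ hcplx σ F).mpr hF,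
          (isFacet_closedStar_iff Δ hcplx σ F').mpr hF', ?_⟩
        have h1 : σ ⊆ F ∩ F' := Finset.subset_inter hF.2 hF'.2
        have h2 : d - 1 ≤ (F ∩ F').card := le_trans hcard (Finset.card_le_card h1)
        have h3 : (F ∩ F').card ≤ d := by
          rw [← hFd]; exact Finset.card_le_card Finset.inter_subset_left
        have h4 : (F ∩ F').card ≠ d := by
          intro hcc
          apply hFF
          have : F ∩ F' = F := Finset.eq_of_subset_of_card_le Finset.inter_subset_left
            (by omega)
          have hFsub : F ⊆ F' := by rw [← this]; exact Finset.inter_subset_right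
          exact (hF'.1.2 F' hF'.1.1 subset_rfl ▸ (hF.1.2 F' hF'.1.1 hFsub)).symm ▸ rfl
        omega
    · push_neg at hcard
      -- bridge: connect two facets both containing σ ∪ {x}
      have bridge : ∀ x : V, x ∉ σ → σ ∪ {x} ∈ Δ → ∀ A B, IsFacet Δ A → IsFacet Δ B →
          σ ∪ {x} ⊆ A → σ ∪ {x} ⊆ B →
          Relation.ReflTransGen (fun A B => IsFacet (closedStar Δ σ) A ∧
            IsFacet (closedStar Δ σ) B ∧ (A ∩ B).card = d - 1) A B := by
        intro x hx hτ A B hA hB hA2 hB2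
        have hτcard : (σ ∪ {x}).card = σ.card + 1 := by
          rw [Finset.card_union_of_disjoint (Finset.disjoint_singleton_right.mpr hx), Finset.card_singleton]
        have hchain := IH (σ ∪ {x}) hτ (by omega) A B
          ((isFacet_closedStar_iff Δ hcplx _ A).mpr ⟨hA, hA2⟩)
          ((isFacet_closedStar_iff Δ hcplx _ B).mpr ⟨hB, hB2⟩)
        refine Relation.ReflTransGen.mono ?_ _ _ hchain
        rintro A' B' ⟨h1, h2, h3⟩
        rw [isFacet_closedStar_iff Δ hcplx _ A'] at h1
        rw [isFacet_closedStar_iff Δ hcplx _ B'] at h2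
        exact ⟨(isFacet_closedStar_iff Δ hcplx σ A').mpr
            ⟨h1.1, (Finset.subset_union_left).trans h1.2⟩,
          (isFacet_closedStar_iff Δ hcplx σ B').mpr
            ⟨h2.1, (Finset.subset_union_left).trans h2.2⟩, h3⟩
      have hvex : (F \ σ).Nonempty := by
        rw [← Finset.card_pos, Finset.card_sdiff_of_subset hF.2, hFd]; omega
      have hwex : (F' \ σ).Nonempty := by
        rw [← Finset.card_pos, Finset.card_sdiff_of_subset hF'.2, hF'd]; omega
      obtain ⟨v, hv⟩ := hvex
      obtain ⟨w, hw⟩ := hwex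
      rw [Finset.mem_sdiff] at hv hw
      have hmemlink : ∀ (u : V) (G : Finset V), IsFacet Δ G → σ ⊆ G → u ∈ G → u ∉ σ →
          ({u} : Finset V) ∈ link Δ σ := by
        intro u G hG hσG huG huσ
        refine ⟨hcplx.2 u, Finset.disjoint_singleton_right.mpr huσ, ?_⟩
        exact hcplx.1 G hG.1 _ (Finset.union_subset hσG (Finset.singleton_subset_iff.mpr huG))
      have hwalk := hIII σ hσ hcard v w
        (hmemlink v F hF.1 hF.2 hv.1 hv.2) (hmemlink w F' hF'.1 hF'.2 hw.1 hw.2)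
      have key : ∀ (a : V), Relation.ReflTransGen
          (fun a b => ({a, b} : Finset V) ∈ link Δ σ) a w → a ∉ σ →
          ∀ Fa, IsFacet Δ Fa → σ ∪ {a} ⊆ Fa →
          Relation.ReflTransGen (fun A B => IsFacet (closedStar Δ σ) A ∧
            IsFacet (closedStar Δ σ) B ∧ (A ∩ B).card = d - 1) Fa F' := by
        intro a h
        induction h using Relation.ReflTransGen.head_induction_on with
        | refl =>
          intro hwσ Fa hFa hsub
          exact bridge w hwσ (hcplx.1 Fa hFa.1 _ hsub) Fa F' hFa hF'.1 hsub
            (Finset.union_subset hF'.2 (Finset.singleton_subset_iff.mpr hw.1))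
        | head h' _ ih =>
          rename_i a c _
          intro haσ Fa hFa hsub
          obtain ⟨hacΔ, hdisj, hunion⟩ := h'
          have hcσ : c ∉ σ := Finset.disjoint_right.mp hdisj
            (Finset.mem_insert_of_mem (Finset.mem_singleton_self c))
          obtain ⟨G, hG, hsubG⟩ := exists_facet Δ _ hunion
          have hσG : σ ⊆ G := (Finset.subset_union_left).trans hsubG
          have hchain1 := bridge a haσ (hcplx.1 Fa hFa.1 _ hsub) Fa G hFa hG hsub
            (Finset.union_subset hσG (Finset.singleton_subset_iff.mpr
              (hsubG (Finset.mem_union_right σ (Finset.mem_insert_self a {c})))))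
          have hchain2 := ih hcσ G hG
            (Finset.union_subset hσG (Finset.singleton_subset_iff.mpr
              (hsubG (Finset.mem_union_right σ
                (Finset.mem_insert_of_mem (Finset.mem_singleton_self c))))))
          exact hchain1.trans hchain2
      exact key v hwalk hv.2 F hF.1
        (Finset.union_subset hF.2 (Finset.singleton_subset_iff.mpr hv.1))
end

section
/- Let Δ be a (d−1)-dimensional simplicial complex with d ≥ 2 satisfying properties (I)–(III). Then for any S ⊆ {1,…,d} with |S| = 2, the rank-selected subcomplex Δ_S is connected. -/
section AuxLemmas
variable {V : Type*} [Fintype V] [DecidableEq V]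

lemma exists_facet_aux (Δ : Set (Finset V)) {F : Finset V} (hF : F ∈ Δ) :
    ∃ G, IsFacet Δ G ∧ F ⊆ G := by
  obtain ⟨G, ⟨hG, hFG⟩, hmax⟩ := Set.Finite.exists_maximalFor Finset.card
    {G | G ∈ Δ ∧ F ⊆ G} (Set.toFinite _) ⟨F, hF, subset_rfl⟩
  refine ⟨G, ⟨hG, fun H hH hGH => ?_⟩, hFG⟩
  have h := @hmax H ⟨hH, hFG.trans hGH⟩ (Finset.card_le_card hGH)
  exact (Finset.eq_of_subset_of_card_le hGH h.ge).symm


lemma link_facet_aux (Δ : Set (Finset V)) (hdc : ∀ F ∈ Δ, ∀ G, G ⊆ F → G ∈ Δ)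
    (a : V) {G : Finset V} (hG : IsFacet (link Δ {a}) G) :
    a ∉ G ∧ IsFacet Δ (insert a G) := by
  obtain ⟨⟨hGΔ, hdisj, hu⟩, hmax⟩ := hG
  have haG : a ∉ G := Finset.disjoint_singleton_left.mp hdisj
  refine ⟨haG, ⟨by rwa [Finset.insert_eq], fun H hH hsub => ?_⟩⟩
  have haH : a ∈ H := hsub (Finset.mem_insert_self a G)
  have h1 : H.erase a ∈ link Δ {a} := by
    refine ⟨hdc H hH _ (Finset.erase_subset a H),
      Finset.disjoint_singleton_left.mpr (Finset.notMem_erase a H), ?_⟩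
    rw [← Finset.insert_eq, Finset.insert_erase haH]
    exact hH
  have h2 : G ⊆ H.erase a :=
    Finset.subset_erase.mpr ⟨(Finset.subset_insert a G).trans hsub, haG⟩
  have h3 := hmax _ h1 h2
  rw [← Finset.insert_erase haH, h3]


lemma two_color_conn_aux {C : Type*} (κ : V → C) (i j : C) (hij : i ≠ j) :
    ∀ d : ℕ, 2 ≤ d → ∀ Δ : Set (Finset V),
    (∀ F ∈ Δ, ∀ G, G ⊆ F → G ∈ Δ) →
    HasDim Δ d → IsPure Δ d →
    (∀ F ∈ Δ, Set.InjOn κ ↑F) →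
    LinksConn Δ d →
    (∀ F, IsFacet Δ F → (∃ x ∈ F, κ x = i) ∧ (∃ x ∈ F, κ x = j)) →
    ∀ v w : V, ({v} : Finset V) ∈ Δ → (κ v = i ∨ κ v = j) →
      ({w} : Finset V) ∈ Δ → (κ w = i ∨ κ w = j) →
      Relation.ReflTransGen (fun a b => ({a, b} : Finset V) ∈ Δ ∧
        (κ a = i ∨ κ a = j) ∧ (κ b = i ∨ κ b = j)) v w := by
  intro d
  induction d using Nat.strong_induction_on with
  | _ d IH =>
  intro hd Δ hdc hdim hpure hbal hlinks hfac v w hvΔ hspv hwΔ hspw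
  set R : V → V → Prop := fun a b => ({a, b} : Finset V) ∈ Δ ∧
    (κ a = i ∨ κ a = j) ∧ (κ b = i ∨ κ b = j) with hR
  have hRsymm : Symmetric R := by
    intro a b ⟨h1, h2, h3⟩
    exact ⟨by rwa [Finset.pair_comm], h3, h2⟩
  -- the empty set is a face
  obtain ⟨hub, F0, hF0, hcard0⟩ := hdim
  have hempty : (∅ : Finset V) ∈ Δ := hdc F0 hF0 ∅ (Finset.empty_subset _)
  -- Δ is connected
  have hlink0 : link Δ ∅ = Δ := by
    ext G; simp [link]
  have hconn : Conn Δ := by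
    have h := hlinks ∅ hempty (by simp; omega)
    rwa [hlink0] at h
  -- Claim C: vertices of facets through a common vertex are connected
  have claimC : ∀ (a x y : V) (F G : Finset V), IsFacet Δ F → IsFacet Δ G →
      a ∈ F → a ∈ G → x ∈ F → y ∈ G → (κ x = i ∨ κ x = j) → (κ y = i ∨ κ y = j) →
      Relation.ReflTransGen R x y := by
    intro a x y F G hFf hGf haF haG hxF hyG hspx hspy
    by_cases hsa : κ a = i ∨ κ a = j
    · -- a itself has a selected color: go through a
      have step : ∀ (z : V) (H : Finset V), IsFacet Δ H → a ∈ H → z ∈ H →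
          (κ z = i ∨ κ z = j) → Relation.ReflTransGen R z a := by
        intro z H hH haH hzH hz
        rcases eq_or_ne z a with rfl | hne
        · exact .refl
        · refine .single ⟨hdc H hH.1 {z, a} ?_, hz, hsa⟩
          exact Finset.insert_subset_iff.mpr ⟨hzH, Finset.singleton_subset_iff.mpr haH⟩
      exact (step x F hFf haF hxF hspx).trans
        (by haveI : Std.Symm R := ⟨fun _ _ h => hRsymm h⟩; exact Std.Symm.symm _ _ (step y G hGf haG hyG hspy))
    · -- a has a different color: use the link of a and the induction hypothesis
      push_neg at hsa
      obtain ⟨hsa1, hsa2⟩ := hsa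
      obtain ⟨⟨xi, hxiF, hxii⟩, ⟨xj, hxjF, hxjj⟩⟩ := hfac F hFf
      have hdF := hpure F hFf
      have haxi : a ≠ xi := fun h => hsa1 (h ▸ hxii)
      have haxj : a ≠ xj := fun h => hsa2 (h ▸ hxjj)
      have hxixj : xi ≠ xj := fun h => hij (hxii ▸ h ▸ hxjj)
      have hd3 : 3 ≤ d := by
        have hsub : ({a, xi, xj} : Finset V) ⊆ F := by
          intro u hu; simp only [Finset.mem_insert, Finset.mem_singleton] at hu
          rcases hu with rfl | rfl | rfl <;> assumption
        have hcard3 : ({a, xi, xj} : Finset V).card = 3 := by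
          rw [Finset.card_insert_of_notMem (by simp [haxi, haxj]),
            Finset.card_insert_of_notMem (by simp [hxixj]), Finset.card_singleton]
        calc 3 = ({a, xi, xj} : Finset V).card := hcard3.symm
          _ ≤ F.card := Finset.card_le_card hsub
          _ = d := hdF
      have haΔ : ({a} : Finset V) ∈ Δ :=
        hdc F hFf.1 {a} (Finset.singleton_subset_iff.mpr haF)
      set Δ' := link Δ {a} with hΔ'
      -- downward closedness of the link
      have hdc' : ∀ F ∈ Δ', ∀ G, G ⊆ F → G ∈ Δ' := by
        intro P ⟨hP, hdis, hu⟩ Q hQP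
        refine ⟨hdc P hP Q hQP, ?_, hdc _ hu _ (Finset.union_subset_union_right hQP)⟩
        exact Finset.disjoint_singleton_left.mpr
          (fun h => Finset.disjoint_singleton_left.mp hdis (hQP h))
      -- dimension of the link
      have hdim' : HasDim Δ' (d - 1) := by
        constructor
        · intro G ⟨hG, hdis, hu⟩
          have := hub _ hu
          rw [Finset.card_union_of_disjoint hdis, Finset.card_singleton] at this
          omega
        · refine ⟨F.erase a, ⟨hdc F hFf.1 _ (Finset.erase_subset a F),
            Finset.disjoint_singleton_left.mpr (Finset.notMem_erase a F), ?_⟩, ?_⟩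
          · rw [← Finset.insert_eq, Finset.insert_erase haF]; exact hFf.1
          · rw [Finset.card_erase_of_mem haF, hdF]
      -- purity of the link
      have hpure' : IsPure Δ' (d - 1) := by
        intro G hGf
        obtain ⟨haG', hfacIns⟩ := link_facet_aux Δ hdc a hGf
        have h := hpure _ hfacIns
        rw [Finset.card_insert_of_notMem haG'] at h
        omega
      -- balancedness of the link
      have hbal' : ∀ F ∈ Δ', Set.InjOn κ ↑F := fun P hP => hbal P hP.1
      -- links of the link are connected
      have hlinks' : LinksConn Δ' (d - 1) := by
        intro P hP hcard
        obtain ⟨hPΔ, hPdis, hPu⟩ := hP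
        have haP : a ∉ P := Finset.disjoint_singleton_left.mp hPdis
        have heq : link Δ' P = link Δ ({a} ∪ P) := by
          ext Q
          constructor
          · rintro ⟨⟨hQΔ, hdisaQ, huaQ⟩, hdisPQ, ⟨_, _, huniΔ⟩⟩
            refine ⟨hQΔ, Finset.disjoint_union_left.mpr ⟨hdisaQ, hdisPQ⟩, ?_⟩
            rwa [Finset.union_assoc]
          · rintro ⟨hQΔ, hdis, hu⟩
            obtain ⟨hdisaQ, hdisPQ⟩ := Finset.disjoint_union_left.mp hdis
            rw [Finset.union_assoc] at hu
            refine ⟨⟨hQΔ, hdisaQ, hdc _ hu _ (Finset.union_subset_union_right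
              Finset.subset_union_right)⟩, hdisPQ, ?_⟩
            refine ⟨hdc _ hu _ Finset.subset_union_right, ?_, hu⟩
            rw [Finset.disjoint_union_right]
            exact ⟨hPdis, hdisaQ⟩
        rw [heq]
        apply hlinks ({a} ∪ P) hPu
        have : ({a} ∪ P).card ≤ 1 + P.card := by
          apply le_trans (Finset.card_union_le _ _); simp
        omega
      -- facets of the link contain both colors
      have hfac' : ∀ G, IsFacet Δ' G → (∃ x ∈ G, κ x = i) ∧ (∃ x ∈ G, κ x = j) := by
        intro G hGf
        obtain ⟨haG', hfacIns⟩ := link_facet_aux Δ hdc a hGf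
        obtain ⟨⟨yi, hyi, hyii⟩, ⟨yj, hyj, hyjj⟩⟩ := hfac _ hfacIns
        constructor
        · refine ⟨yi, ?_, hyii⟩
          rcases Finset.mem_insert.mp hyi with rfl | h
          · exact absurd hyii hsa1
          · exact h
        · refine ⟨yj, ?_, hyjj⟩
          rcases Finset.mem_insert.mp hyj with rfl | h
          · exact absurd hyjj hsa2
          · exact h
      -- x and y are vertices of the link
      have hvert : ∀ (z : V) (H : Finset V), IsFacet Δ H → a ∈ H → z ∈ H →
          (κ z = i ∨ κ z = j) → ({z} : Finset V) ∈ Δ' := by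
        intro z H hH haH hzH hz
        have hza : z ≠ a := by
          rintro rfl; rcases hz with h | h
          exacts [hsa1 h, hsa2 h]
        refine ⟨hdc H hH.1 {z} (Finset.singleton_subset_iff.mpr hzH),
          Finset.disjoint_singleton_left.mpr (by simp [Ne.symm hza]), ?_⟩
        rw [← Finset.insert_eq]
        exact hdc H hH.1 {a, z} (Finset.insert_subset_iff.mpr
          ⟨haH, Finset.singleton_subset_iff.mpr hzH⟩)
      have hIH := IH (d - 1) (by omega) (by omega) Δ' hdc' hdim' hpure' hbal' hlinks'
        hfac' x y (hvert x F hFf haF hxF hspx) hspx (hvert y G hGf haG hyG hspy) hspy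
      refine Relation.ReflTransGen.mono ?_ _ _ hIH
      rintro p q ⟨h1, h2, h3⟩
      exact ⟨h1.1, h2, h3⟩
  -- main walk argument
  have key : ∀ c, Relation.ReflTransGen (fun a b => ({a, b} : Finset V) ∈ Δ) v c →
      ∀ F, IsFacet Δ F → c ∈ F → ∀ x ∈ F, (κ x = i ∨ κ x = j) →
      Relation.ReflTransGen R v x := by
    intro c hwalk
    induction hwalk with
    | refl =>
      intro F hF hvF x hx hsp
      exact claimC v v x F F hF hF hvF hvF hvF hx hspv hsp
    | @tail b c hvb hbc IH2 =>
      intro F hF hcF x hxF hspx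
      obtain ⟨H, hHfac, hsubH⟩ := exists_facet_aux Δ hbc
      have hbH : b ∈ H := hsubH (by simp)
      have hcH : c ∈ H := hsubH (by simp)
      obtain ⟨⟨xi, hxiH, hxii⟩, _⟩ := hfac H hHfac
      have h1 := IH2 H hHfac hbH xi hxiH (Or.inl hxii)
      have h2 := claimC c xi x H F hHfac hF hcH hcF hxiH hxF (Or.inl hxii) hspx
      exact h1.trans h2
  obtain ⟨Fw, hFwfac, hsubw⟩ := exists_facet_aux Δ hwΔ
  exact key w (hconn v w hvΔ hwΔ) Fw hFwfac (hsubw (Finset.mem_singleton_self w)) w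
    (hsubw (Finset.mem_singleton_self w)) hspw

end AuxLemmas

/-- If `Δ` is a `(d-1)`-dimensional simplicial complex, `d ≥ 2`,
satisfying properties (I)–(III), then for every set `S` of two colors the rank-selected
subcomplex `Δ_S` is connected. -/
theorem rankSel_connected {V : Type*} [Fintype V] [DecidableEq V] (d : ℕ)
    (hd : 2 ≤ d) (Δ : Set (Finset V)) (κ : V → Fin d)
    (hcplx : IsComplex Δ) (hdim : HasDim Δ d)
    (hI : IsPure Δ d) (hII : IsBalanced Δ κ) (hIII : LinksConn Δ d)
    (S : Finset (Fin d)) (hS : S.card = 2) :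
    Conn (rankSel Δ κ S) := by
  obtain ⟨i, j, hij, rfl⟩ := Finset.card_eq_two.mp hS
  have hfacets : ∀ F, IsFacet Δ F → (∃ x ∈ F, κ x = i) ∧ (∃ x ∈ F, κ x = j) := by
    intro F hFf
    have hcard := hI F hFf
    have hinj := hII F hFf.1
    have himg : F.image κ = Finset.univ := Finset.eq_univ_of_card _ (by
      rw [Finset.card_image_of_injOn hinj, hcard, Fintype.card_fin])
    constructor
    · obtain ⟨x, hx, hxe⟩ := Finset.mem_image.mp (himg ▸ Finset.mem_univ i)
      exact ⟨x, hx, hxe⟩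
    · obtain ⟨x, hx, hxe⟩ := Finset.mem_image.mp (himg ▸ Finset.mem_univ j)
      exact ⟨x, hx, hxe⟩
  intro v w hv hw
  obtain ⟨hvΔ, hvc⟩ := hv
  obtain ⟨hwΔ, hwc⟩ := hw
  have hspv : κ v = i ∨ κ v = j := by
    have := hvc v (Finset.mem_singleton_self v); simpa using this
  have hspw : κ w = i ∨ κ w = j := by
    have := hwc w (Finset.mem_singleton_self w); simpa using this
  have h := two_color_conn_aux κ i j hij d hd Δ hcplx.1 hdim hI hII hIII hfacets
    v w hvΔ hspv hwΔ hspw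
  refine Relation.ReflTransGen.mono ?_ _ _ h
  rintro a b ⟨h1, h2, h3⟩
  refine ⟨h1, ?_⟩
  intro u hu
  rcases Finset.mem_insert.mp hu with rfl | hu
  · rcases h2 with h | h <;> simp [h]
  · rw [Finset.mem_singleton.mp hu]
    rcases h3 with h | h <;> simp [h]
end

section
/- Let Δ be a (d−1)-dimensional simplicial complex with d ≥ 2 satisfying properties (I)–(III), and let S ⊆ {1,…,d} with |S| = 2. If v and v′ are vertices of the rank-selected subcomplex Δ_S, then every edge path in Δ from v to v′ is equivalent to an edge path from v to v′ all of whose edges lie in Δ_S. -/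
/-- An edge path in `Δ`, encoded by its (nonempty, length `≥ 2`) list of vertices:
consecutive vertices span a face of `Δ` (possibly a repeated vertex, giving a
degenerate edge). -/
def IsEdgePath {V : Type*} [DecidableEq V] (Δ : Set (Finset V)) (γ : List V) : Prop :=
  2 ≤ γ.length ∧ List.Chain' (fun a b => ({a, b} : Finset V) ∈ Δ) γ

/-- An edge path in `Δ` from `v` to `w`. -/
def EdgePathFrom {V : Type*} [DecidableEq V] (Δ : Set (Finset V)) (γ : List V) (v w : V) :
    Prop :=
  IsEdgePath Δ γ ∧ γ.head? = some v ∧ γ.getLast? = some w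

/-- Simple equivalence of edge paths: a segment `(x,y)(y,z)` is replaced by the single
edge `(x,z)` (with arbitrary, possibly empty, prefix and suffix), where the not
necessarily distinct vertices `x, y, z` satisfy `{x, y, z} ∈ Δ`. -/
inductive SimpleEquiv {V : Type*} [DecidableEq V] (Δ : Set (Finset V)) :
    List V → List V → Prop
  | contract (a b : List V) (x y z : V) :
      ({x, y, z} : Finset V) ∈ Δ →
      SimpleEquiv Δ (a ++ x :: y :: z :: b) (a ++ x :: z :: b)

/-- Equivalence of edge paths: the reflexive-symmetric-transitive closure of
simple equivalence. -/
def EdgeEquiv {V : Type*} [DecidableEq V] (Δ : Set (Finset V)) : List V → List V → Prop :=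
  Relation.EqvGen (SimpleEquiv Δ)


set_option linter.unusedSectionVars false



namespace Stmt5

variable {V : Type*} [DecidableEq V] {d : ℕ}

def res (κ : V → Fin d) (Γ : Set (Finset V)) (U : Finset (Fin d)) : Set (Finset V) :=
  {F | F ∈ Γ ∧ ∀ x ∈ F, κ x ∈ U}

structure Good (κ : V → Fin d) (Γ : Set (Finset V)) (T : Finset (Fin d)) : Prop where
  sub : ∀ F ∈ Γ, ∀ G ⊆ F, G ∈ Γ
  emp : (∅ : Finset V) ∈ Γ
  colors : ∀ F ∈ Γ, ∀ x ∈ F, κ x ∈ T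
  inj : ∀ F ∈ Γ, Set.InjOn κ ↑F
  extend : ∀ F ∈ Γ, ∀ c ∈ T, (∀ x ∈ F, κ x ≠ c) → ∃ w, κ w = c ∧ insert w F ∈ Γ
  conn : ∀ F ∈ Γ, F.card < T.card - 1 → Conn (link Γ F)

variable {κ : V → Fin d} {Γ : Set (Finset V)} {T : Finset (Fin d)}

lemma link_empty (Γ : Set (Finset V)) : link Γ (∅ : Finset V) = Γ := by
  ext G; simp [link]

lemma link_link (hsub : ∀ F ∈ Γ, ∀ G ⊆ F, G ∈ Γ)
    {F G : Finset V} (hG : G ∈ link Γ F) :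
    link (link Γ F) G = link Γ (F ∪ G) := by
  obtain ⟨hGΓ, hdFG, hFG⟩ := hG
  ext H
  simp only [link, Set.mem_setOf_eq, Finset.disjoint_union_left]
  constructor
  · rintro ⟨⟨hH, hdFH, hFH⟩, hdGH, hGH, hdFGH, hFGH⟩
    refine ⟨hH, ⟨hdFH, hdGH⟩, ?_⟩
    rwa [Finset.union_assoc]
  · rintro ⟨hH, ⟨hdFH, hdGH⟩, hU⟩
    rw [Finset.union_assoc] at hU
    refine ⟨⟨hH, hdFH, hsub _ hU _ (by intro z hz; simp at hz ⊢; tauto)⟩, hdGH,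
      hsub _ hU _ (by intro z hz; simp at hz ⊢; tauto), Finset.disjoint_union_right.2 ⟨hdFG, hdFH⟩, hU⟩

lemma Good.imageSub (h : Good κ Γ T) {F : Finset V} (hF : F ∈ Γ) : F.image κ ⊆ T := by
  intro a ha
  obtain ⟨x, hx, rfl⟩ := Finset.mem_image.1 ha
  exact h.colors F hF x hx

lemma Good.cardImage (h : Good κ Γ T) {F : Finset V} (hF : F ∈ Γ) : (F.image κ).card = F.card :=
  Finset.card_image_of_injOn (h.inj F hF)

lemma Good.linkGood (h : Good κ Γ T) {F : Finset V} (hF : F ∈ Γ) :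
    Good κ (link Γ F) (T \ F.image κ) where
  sub := by
    rintro G ⟨hG, hd, hu⟩ G' hG'
    exact ⟨h.sub G hG G' hG', Finset.disjoint_of_subset_right hG' hd,
      h.sub _ hu _ (Finset.union_subset_union_right hG')⟩
  emp := ⟨h.emp, Finset.disjoint_empty_right F, by rwa [Finset.union_empty]⟩
  colors := by
    rintro G ⟨hG, hd, hu⟩ x hx
    rw [Finset.mem_sdiff]
    refine ⟨h.colors G hG x hx, ?_⟩
    intro hmem
    obtain ⟨y, hy, hxy⟩ := Finset.mem_image.1 hmem
    have hx' : x ∈ F ∪ G := Finset.mem_union_right _ hx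
    have hy' : y ∈ F ∪ G := Finset.mem_union_left _ hy
    have : y = x := h.inj _ hu hy' hx' hxy
    subst this
    exact (Finset.disjoint_left.1 hd hy) hx
  inj := fun G hG => h.inj G hG.1
  extend := by
    rintro G ⟨hG, hd, hu⟩ c hc hnone
    rw [Finset.mem_sdiff] at hc
    have hside : ∀ x ∈ F ∪ G, κ x ≠ c := by
      intro x hx
      rcases Finset.mem_union.1 hx with hxF | hxG
      · exact fun he => hc.2 (Finset.mem_image.2 ⟨x, hxF, he⟩)
      · exact hnone x hxG
    obtain ⟨w, hw, hins⟩ := h.extend (F ∪ G) hu c hc.1 hside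
    refine ⟨w, hw, h.sub _ hins _ ?_, ?_, ?_⟩
    · exact Finset.insert_subset_insert _ Finset.subset_union_right
    · rw [Finset.disjoint_right]
      intro a ha
      rcases Finset.mem_insert.1 ha with rfl | ha'
      · intro haF
        exact hc.2 (Finset.mem_image.2 ⟨a, haF, hw⟩)
      · exact fun haF => Finset.disjoint_left.1 hd haF ha'
    · rwa [Finset.union_insert]
  conn := by
    rintro G hG hcard
    rw [link_link h.sub hG]
    obtain ⟨hGΓ, hd, hu⟩ := hG
    have h1 : (F.image κ).card = F.card := h.cardImage hF
    have h2 : F.image κ ⊆ T := h.imageSub hF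
    have h3 : (T \ F.image κ).card = T.card - F.card := by
      rw [Finset.card_sdiff_of_subset h2, h1]
    have h4 : F.card ≤ T.card := h1 ▸ Finset.card_le_card h2
    apply h.conn (F ∪ G) hu
    rw [Finset.card_union_of_disjoint hd]
    rw [h3] at hcard
    omega
end Stmt5
section A2
variable {V : Type*} [DecidableEq V] {d : ℕ}
variable {κ : V → Fin d} {Γ : Set (Finset V)} {T : Finset (Fin d)}
namespace Stmt5

lemma res_subset (κ : V → Fin d) (Γ : Set (Finset V)) (U : Finset (Fin d)) :
    res κ Γ U ⊆ Γ := fun _ h => h.1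

lemma res_mono (κ : V → Fin d) (Γ : Set (Finset V)) {U U' : Finset (Fin d)} (h : U ⊆ U') :
    res κ Γ U ⊆ res κ Γ U' := fun _ hF => ⟨hF.1, fun x hx => h (hF.2 x hx)⟩

lemma res_res (κ : V → Fin d) (Γ : Set (Finset V)) {U U' : Finset (Fin d)} (h : U' ⊆ U) :
    res κ (res κ Γ U) U' = res κ Γ U' := by
  ext F
  constructor
  · rintro ⟨⟨h1, _⟩, h2⟩; exact ⟨h1, h2⟩
  · rintro ⟨h1, h2⟩; exact ⟨⟨h1, fun x hx => h (h2 x hx)⟩, h2⟩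

lemma res_eq_self (κ : V → Fin d) {Γ : Set (Finset V)} {U : Finset (Fin d)}
    (h : ∀ F ∈ Γ, ∀ x ∈ F, κ x ∈ U) : res κ Γ U = Γ := by
  ext F
  exact ⟨fun hF => hF.1, fun hF => ⟨hF, h F hF⟩⟩

lemma res_congr (κ : V → Fin d) {Γ : Set (Finset V)} {A U U' : Finset (Fin d)}
    (hA : ∀ F ∈ Γ, ∀ x ∈ F, κ x ∈ A) (h : ∀ a ∈ A, (a ∈ U ↔ a ∈ U')) :
    res κ Γ U = res κ Γ U' := by
  ext F
  constructor
  · rintro ⟨h1, h2⟩; exact ⟨h1, fun x hx => (h _ (hA F h1 x hx)).1 (h2 x hx)⟩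
  · rintro ⟨h1, h2⟩; exact ⟨h1, fun x hx => (h _ (hA F h1 x hx)).2 (h2 x hx)⟩

lemma link_res {U : Finset (Fin d)} {F : Finset V} (hF : F ∈ res κ Γ U) :
    link (res κ Γ U) F = res κ (link Γ F) U := by
  ext H
  constructor
  · rintro ⟨⟨hH, hcol⟩, hd, hu, _⟩
    exact ⟨⟨hH, hd, hu⟩, hcol⟩
  · rintro ⟨⟨hH, hd, hu⟩, hcol⟩
    refine ⟨⟨hH, hcol⟩, hd, hu, ?_⟩
    intro x hx
    rcases Finset.mem_union.1 hx with h1 | h1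
    · exact hF.2 x h1
    · exact hcol x h1

/-- key color fact for edges in the link of a vertex -/
lemma link_edge_colors (h : Good κ Γ T) {u a b : V}
    (hab : ({a, b} : Finset V) ∈ link Γ ({u} : Finset V)) :
    ({a, b} : Finset V) ∈ Γ ∧ κ a ≠ κ u ∧ κ b ≠ κ u := by
  obtain ⟨habΓ, hd, hu⟩ := hab
  rw [← Finset.insert_eq] at hu
  have hinj := h.inj _ hu
  have hau : a ≠ u := fun he => by
    have := Finset.disjoint_right.1 hd (Finset.mem_insert_self a {b})
    simp [he] at this
  have hbu : b ≠ u := fun he => by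
    have := Finset.disjoint_right.1 hd (Finset.mem_insert.2 (Or.inr (Finset.mem_singleton_self b)))
    simp [he] at this
  refine ⟨habΓ, ?_, ?_⟩
  · intro hc; exact hau (hinj (by simp) (by simp) hc)
  · intro hc; exact hbu (hinj (by simp) (by simp) hc)

lemma detour (h : Good κ Γ T) (h3 : 3 ≤ T.card) {c : Fin d} {u x y : V}
    (hu : κ u = c) (hx : κ x ≠ c) (hy : κ y ≠ c)
    (hxu : ({x, u} : Finset V) ∈ Γ) (huy : ({u, y} : Finset V) ∈ Γ) :
    Relation.ReflTransGen (fun a b => ({a, b} : Finset V) ∈ res κ Γ (T.erase c)) x y := by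
  have hu1 : ({u} : Finset V) ∈ Γ := h.sub _ hxu _ (by intro z hz; simp at hz; simp [hz])
  have hconn := h.conn {u} hu1 (by simp only [Finset.card_singleton]; omega)
  have hxlk : ({x} : Finset V) ∈ link Γ ({u} : Finset V) := by
    refine ⟨h.sub _ hxu _ (by intro z hz; simp at hz; simp [hz]), ?_, ?_⟩
    · simp only [Finset.disjoint_singleton]
      exact fun he => hx (he ▸ hu)
    · rw [← Finset.insert_eq]
      rwa [Finset.pair_comm] at hxu
  have hylk : ({y} : Finset V) ∈ link Γ ({u} : Finset V) := by
    refine ⟨h.sub _ huy _ (by intro z hz; simp at hz; simp [hz]), ?_, ?_⟩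
    · simp only [Finset.disjoint_singleton]
      exact fun he => hy (he ▸ hu)
    · rwa [← Finset.insert_eq]
  refine Relation.ReflTransGen.mono ?_ _ _ (hconn x y hxlk hylk)
  intro a b hab
  obtain ⟨habΓ, ha, hb⟩ := link_edge_colors h hab
  refine ⟨habΓ, ?_⟩
  intro z hz
  rw [Finset.mem_erase]
  rcases Finset.mem_insert.1 hz with rfl | hz'
  · exact ⟨hu ▸ ha, h.colors _ habΓ z hz⟩
  · rw [Finset.mem_singleton] at hz'
    subst hz'
    exact ⟨hu ▸ hb, h.colors _ habΓ z hz⟩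

lemma clean (h : Good κ Γ T) (h3 : 3 ≤ T.card) {c : Fin d} {a : V} (ha : κ a ≠ c)
    {b : V} (hab : Relation.ReflTransGen (fun p q => ({p, q} : Finset V) ∈ Γ) a b) :
    (κ b ≠ c → Relation.ReflTransGen (fun p q => ({p, q} : Finset V) ∈ res κ Γ (T.erase c)) a b)
    ∧ (κ b = c → ∀ y, ({b, y} : Finset V) ∈ Γ → κ y ≠ c →
        Relation.ReflTransGen (fun p q => ({p, q} : Finset V) ∈ res κ Γ (T.erase c)) a y) := by
  induction hab with
  | refl =>
    exact ⟨fun _ => .refl, fun hb => absurd hb ha⟩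
  | @tail b' c' h1 h2 IH =>
    constructor
    · intro hc'
      by_cases hb' : κ b' = c
      · exact IH.2 hb' c' h2 hc'
      · refine (IH.1 hb').tail ⟨h2, ?_⟩
        intro z hz
        rw [Finset.mem_erase]
        rcases Finset.mem_insert.1 hz with rfl | hz'
        · exact ⟨hb', h.colors _ h2 z hz⟩
        · rw [Finset.mem_singleton] at hz'
          subst hz'
          exact ⟨hc', h.colors _ h2 z hz⟩
    · intro hc' y hy hyc
      by_cases hb' : κ b' = c
      · have hbc : b' = c' := h.inj _ h2 (by simp) (by simp) (hb'.trans hc'.symm)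
        subst hbc
        exact IH.2 hb' y hy hyc
      · exact (IH.1 hb').trans (detour h h3 hc' hb' hyc h2 hy)

lemma conn_res_erase (h : Good κ Γ T) (h3 : 3 ≤ T.card) (c : Fin d) :
    Conn (res κ Γ (T.erase c)) := by
  intro v w hv hw
  have hv' : κ v ≠ c := (Finset.mem_erase.1 (hv.2 v (Finset.mem_singleton_self v))).1
  have hw' : κ w ≠ c := (Finset.mem_erase.1 (hw.2 w (Finset.mem_singleton_self w))).1
  have hconn : Conn Γ := by
    have := h.conn ∅ h.emp (by simp; omega)
    rwa [link_empty] at this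
  exact (clean h h3 hv' (hconn v w hv.1 hw.1)).1 hw'

lemma Good.resErase (h : Good κ Γ T) {c : Fin d} (hc : c ∈ T) :
    Good κ (res κ Γ (T.erase c)) (T.erase c) where
  sub := by
    rintro F ⟨hF, hcol⟩ G hG
    exact ⟨h.sub F hF G hG, fun x hx => hcol x (hG hx)⟩
  emp := ⟨h.emp, by simp⟩
  colors := fun F hF => hF.2
  inj := fun F hF => h.inj F hF.1
  extend := by
    rintro F ⟨hF, hcol⟩ c' hc' hno
    obtain ⟨w, hw, hins⟩ := h.extend F hF c' (Finset.mem_of_mem_erase hc') hno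
    refine ⟨w, hw, hins, ?_⟩
    intro x hx
    rcases Finset.mem_insert.1 hx with rfl | hx'
    · exact hw ▸ hc'
    · exact hcol x hx'
  conn := by
    intro F hF hcard
    rw [link_res hF]
    have hlg : Good κ (link Γ F) (T \ F.image κ) := h.linkGood hF.1
    have himg : F.image κ ⊆ T := h.imageSub hF.1
    have hcards : (T \ F.image κ).card = T.card - F.card := by
      rw [Finset.card_sdiff_of_subset himg, h.cardImage hF.1]
    have hFle : F.card ≤ T.card := (h.cardImage hF.1) ▸ Finset.card_le_card himg
    have hTc : 1 ≤ T.card := Finset.card_pos.2 ⟨c, hc⟩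
    rw [Finset.card_erase_of_mem hc] at hcard
    have h3' : 3 ≤ (T \ F.image κ).card := by omega
    have h5 := conn_res_erase hlg h3' c
    have heq : res κ (link Γ F) ((T \ F.image κ).erase c) = res κ (link Γ F) (T.erase c) := by
      refine res_congr κ (fun G hG => hlg.colors G hG) ?_
      intro a haA
      rw [Finset.mem_sdiff] at haA
      simp only [Finset.mem_erase, Finset.mem_sdiff]
      tauto
    rwa [heq] at h5

lemma res_good_aux (κ : V → Fin d) :
    ∀ (n : ℕ) (Γ : Set (Finset V)) (T T' : Finset (Fin d)), Good κ Γ T → T' ⊆ T →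
      (T \ T').card = n → Good κ (res κ Γ T') T' := by
  intro n
  induction n with
  | zero =>
    intro Γ T T' h hsub hcard
    have hTT : T ⊆ T' := by
      rwa [← Finset.sdiff_eq_empty_iff_subset, ← Finset.card_eq_zero]
    have : T' = T := Finset.Subset.antisymm hsub hTT
    subst this
    rw [res_eq_self κ h.colors]
    exact h
  | succ n IH =>
    intro Γ T T' h hsub hcard
    have hne : (T \ T').Nonempty := by
      rw [← Finset.card_pos, hcard]; omega
    obtain ⟨c, hc⟩ := hne
    rw [Finset.mem_sdiff] at hc
    have h1 : Good κ (res κ Γ (T.erase c)) (T.erase c) := h.resErase hc.1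
    have h2 : T' ⊆ T.erase c := Finset.subset_erase.2 ⟨hsub, hc.2⟩
    have h3 : ((T.erase c) \ T').card = n := by
      have : (T.erase c) \ T' = (T \ T').erase c := by
        ext a
        simp only [Finset.mem_erase, Finset.mem_sdiff]
        tauto
      rw [this, Finset.card_erase_of_mem (Finset.mem_sdiff.2 hc), hcard]
      omega
    have := IH (res κ Γ (T.erase c)) (T.erase c) T' h1 h2 h3
    rwa [res_res κ Γ h2] at this

lemma Good.resGood (h : Good κ Γ T) {T' : Finset (Fin d)} (hT' : T' ⊆ T) :
    Good κ (res κ Γ T') T' :=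
  res_good_aux κ (T \ T').card Γ T T' h hT' rfl

end Stmt5
end A2
section A3
namespace Stmt5
variable {V : Type*} [DecidableEq V] {d : ℕ}
variable {κ : V → Fin d} {Γ : Set (Finset V)} {T : Finset (Fin d)}

lemma edgeEquiv_mono {Γ₁ Γ₂ : Set (Finset V)} (h : Γ₁ ⊆ Γ₂) {γ γ' : List V}
    (he : EdgeEquiv Γ₁ γ γ') : EdgeEquiv Γ₂ γ γ' := by
  induction he with
  | rel p q hr =>
    cases hr with
    | contract a b x y z hm => exact Relation.EqvGen.rel _ _ (SimpleEquiv.contract a b x y z (h hm))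
  | refl p => exact Relation.EqvGen.refl p
  | symm p q _ ih => exact Relation.EqvGen.symm _ _ ih
  | trans p q r _ _ ih1 ih2 => exact Relation.EqvGen.trans _ _ _ ih1 ih2

lemma head?_congr (A : List V) (x : V) (r r' : List V) :
    (A ++ x :: r).head? = (A ++ x :: r').head? := by
  cases A <;> simp

lemma getLast?_congr {M M' : List V} (B : List V) {y : V}
    (h1 : M.getLast? = some y) (h2 : M'.getLast? = some y) :
    (M ++ B).getLast? = (M' ++ B).getLast? := by
  rw [List.getLast?_append, List.getLast?_append, h1, h2]

lemma chain'_glue {R : V → V → Prop} {A B l : List V} {x u y : V}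
    (hγ : List.Chain' R (A ++ x :: u :: y :: B))
    (hl : List.Chain' R (x :: l)) (hlast : (x :: l).getLast? = some y) :
    List.Chain' R (A ++ x :: l ++ B) := by
  have h1 : List.Chain' R A := hγ.prefix ⟨x :: u :: y :: B, rfl⟩
  have h2 : List.Chain' R (y :: B) := hγ.suffix ⟨A ++ [x, u], by simp⟩
  have hjoinA : ∀ a ∈ A.getLast?, R a x := by
    have := List.isChain_append.1 hγ
    intro a ha
    exact this.2.2 a ha x rfl
  rw [List.append_assoc]
  refine (List.isChain_append (l₁ := A) (l₂ := (x :: l) ++ B)).2 ⟨h1, ?_, ?_⟩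
  · refine (List.isChain_append (l₁ := x :: l) (l₂ := B)).2 ⟨hl, h2.tail, ?_⟩
    intro a ha b hb
    rw [hlast] at ha
    have ha' : y = a := by simpa using ha
    subst ha'
    cases B with
    | nil => simp at hb
    | cons b' B' =>
      have hb' : b' = b := by simpa using hb
      subst hb'
      exact (List.isChain_cons_cons.1 h2).1
  · intro a ha b hb
    have hb' : x = b := by simpa using hb
    subst hb'
    exact hjoinA a ha

lemma chain'_res (h : Good κ Γ T) {c : Fin d} :
    ∀ {l : List V}, List.Chain' (fun a b => ({a, b} : Finset V) ∈ Γ) l →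
      (∀ z ∈ l, κ z ≠ c) →
      List.Chain' (fun a b => ({a, b} : Finset V) ∈ res κ Γ (T.erase c)) l := by
  intro l
  induction l with
  | nil => intro _ _; exact List.isChain_nil
  | cons a t IH =>
    intro hch hall
    cases t with
    | nil => exact List.isChain_singleton a
    | cons b t' =>
      simp only [List.Chain', List.isChain_cons_cons] at hch ⊢
      refine ⟨⟨hch.1, ?_⟩, IH hch.2 (fun z hz => hall z (List.mem_cons_of_mem a hz))⟩
      intro z hz
      rw [Finset.mem_erase]
      refine ⟨?_, h.colors _ hch.1 z hz⟩
      rcases Finset.mem_insert.1 hz with rfl | hz'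
      · exact hall z (by simp)
      · rw [Finset.mem_singleton] at hz'
        subst hz'
        exact hall z (by simp)

lemma split_bad (κ : V → Fin d) (c : Fin d) :
    ∀ (t : List V) (a : V), κ a ≠ c →
      (a :: t).countP (fun z => decide (κ z = c)) ≠ 0 →
      ∃ P u Q, a :: t = P ++ u :: Q ∧ κ u = c ∧ (∀ z ∈ P, κ z ≠ c) ∧ P ≠ [] := by
  intro t
  induction t with
  | nil =>
    intro a ha h0
    exfalso
    apply h0
    simp [List.countP_cons, ha]
  | cons b t IH =>
    intro a ha h0
    by_cases hb : κ b = c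
    · refine ⟨[a], b, t, rfl, hb, ?_, by simp⟩
      intro z hz
      rcases List.mem_singleton.1 hz with rfl
      exact ha
    · have h0' : (b :: t).countP (fun z => decide (κ z = c)) ≠ 0 := by
        intro hz
        apply h0
        have : (a :: b :: t).countP (fun z => decide (κ z = c))
            = (b :: t).countP (fun z => decide (κ z = c)) := by
          rw [List.countP_cons]
          simp [ha]
        rw [this, hz]
      obtain ⟨P, u, Q, heq, hu, hP, hPne⟩ := IH b hb h0'
      refine ⟨a :: P, u, Q, ?_, hu, ?_, by simp⟩
      · rw [List.cons_append, ← heq]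
      · intro z hz
        rcases List.mem_cons.1 hz with rfl | hz'
        · exact ha
        · exact hP z hz'

lemma detour_equiv {u : V} :
    ∀ (l : List V) (x y : V) (A B : List V), l ≠ [] →
      List.Chain (fun a b => ({a, b} : Finset V) ∈ link Γ ({u} : Finset V)) x l →
      (x :: l).getLast? = some y →
      EdgeEquiv Γ (A ++ x :: u :: y :: B) (A ++ x :: l ++ B) := by
  intro l
  induction l with
  | nil => intro x y A B hne; exact absurd rfl hne
  | cons w l₂ IH =>
    intro x y A B _ hchain hy
    simp only [List.Chain, List.isChain_cons_cons] at hchain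
    obtain ⟨hxw, hch₂⟩ := hchain
    have hxwu : ({x, w, u} : Finset V) ∈ Γ := by
      have h1 := hxw.2.2
      rw [← Finset.insert_eq] at h1
      have he : ({x, w, u} : Finset V) = insert u {x, w} := by
        ext z; simp; tauto
      rwa [he]
    cases l₂ with
    | nil =>
      have hyw : w = y := by simpa using hy
      subst hyw
      have hxuw : ({x, u, w} : Finset V) ∈ Γ := by
        have he : ({x, u, w} : Finset V) = {x, w, u} := by ext z; simp; tauto
        rwa [he]
      rw [List.append_assoc]
      show EdgeEquiv Γ (A ++ x :: u :: w :: B) (A ++ x :: w :: B)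
      exact Relation.EqvGen.rel _ _ (SimpleEquiv.contract A B x u w hxuw)
    | cons w₂ l₃ =>
      have hy₂ : (w :: w₂ :: l₃).getLast? = some y := by
        rw [← List.getLast?_cons_cons (a := x)]
        exact hy
      have step : SimpleEquiv Γ (A ++ x :: w :: u :: y :: B) (A ++ x :: u :: y :: B) :=
        SimpleEquiv.contract A (y :: B) x w u hxwu
      have e1 : EdgeEquiv Γ (A ++ x :: u :: y :: B) (A ++ x :: w :: u :: y :: B) :=
        Relation.EqvGen.symm _ _ (Relation.EqvGen.rel _ _ step)
      have e2 := IH w y (A ++ [x]) B (by simp) hch₂ hy₂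
      rw [show (A ++ [x]) ++ w :: u :: y :: B = A ++ x :: w :: u :: y :: B by simp] at e2
      rw [show (A ++ [x]) ++ w :: (w₂ :: l₃) ++ B = A ++ x :: (w :: w₂ :: l₃) ++ B by simp] at e2
      exact Relation.EqvGen.trans _ _ _ e1 e2

end Stmt5
end A3
section A4
namespace Stmt5
variable {V : Type*} [DecidableEq V] {d : ℕ}
variable {κ : V → Fin d} {Γ : Set (Finset V)} {T : Finset (Fin d)}

lemma desaturate (h : Good κ Γ T) (h3 : 3 ≤ T.card) (c : Fin d) :
    ∀ (γ : List V) (v w : V), EdgePathFrom Γ γ v w → κ v ≠ c → κ w ≠ c →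
      ∃ γ', EdgePathFrom (res κ Γ (T.erase c)) γ' v w ∧ EdgeEquiv Γ γ γ' := by
  have main : ∀ (n : ℕ) (γ : List V) (v w : V),
      γ.countP (fun z => decide (κ z = c)) = n →
      EdgePathFrom Γ γ v w → κ v ≠ c → κ w ≠ c →
      ∃ γ', EdgePathFrom (res κ Γ (T.erase c)) γ' v w ∧ EdgeEquiv Γ γ γ' := by
    intro n
    induction n using Nat.strong_induction_on with
    | _ n IH =>
    intro γ v w hcount hγ hv hw
    obtain ⟨⟨hlen, hch⟩, hhead, hlast⟩ := hγ
    by_cases h0 : n = 0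
    · subst h0
      have hall : ∀ z ∈ γ, κ z ≠ c := by
        intro z hz
        have := List.countP_eq_zero.1 hcount z hz
        simpa using this
      exact ⟨γ, ⟨⟨hlen, chain'_res h hch hall⟩, hhead, hlast⟩, Relation.EqvGen.refl γ⟩
    obtain ⟨t, rfl⟩ : ∃ t, γ = v :: t := by
      cases γ with
      | nil => simp at hhead
      | cons a t =>
        have ha : a = v := by simpa using hhead
        exact ⟨t, by rw [ha]⟩
    obtain ⟨P, u, Q, heq, hu, hPgood, hPne⟩ :=
      split_bad κ c t v hv (by rw [hcount]; exact h0)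
    set A := P.dropLast with hA
    set x := P.getLast hPne with hxdef
    have hPx : A ++ [x] = P := List.dropLast_append_getLast hPne
    have hx : κ x ≠ c := hPgood x (List.getLast_mem hPne)
    have hAgood : ∀ z ∈ A, κ z ≠ c := fun z hz => hPgood z ((List.dropLast_sublist P).subset hz)
    cases Q with
    | nil =>
      exfalso
      rw [heq, List.getLast?_concat] at hlast
      have huw : u = w := by simpa using hlast
      exact hw (huw ▸ hu)
    | cons y B =>
      have hγeq : v :: t = A ++ x :: u :: y :: B := by
        rw [heq, ← hPx]
        simp
      have hch' : List.Chain' (fun a b => ({a, b} : Finset V) ∈ Γ) (A ++ x :: u :: y :: B) := by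
        rw [← hγeq]; exact hch
      have hchain3 : List.Chain' (fun a b => ({a, b} : Finset V) ∈ Γ) [x, u, y] := by
        refine hch.infix ⟨A, B, ?_⟩
        rw [hγeq]; simp
      have hxu : ({x, u} : Finset V) ∈ Γ := (List.isChain_cons_cons.1 hchain3).1
      have huy : ({u, y} : Finset V) ∈ Γ := (List.isChain_cons_cons.1 (List.isChain_cons_cons.1 hchain3).2).1
      have hA0 : A.countP (fun z => decide (κ z = c)) = 0 :=
        List.countP_eq_zero.2 (by intro z hz; simpa using hAgood z hz)
      have e1 : (x :: u :: y :: B).countP (fun z => decide (κ z = c))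
          = (y :: B).countP (fun z => decide (κ z = c)) + 1 := by
        rw [List.countP_cons, List.countP_cons]
        simp [hx, hu]
      have hn1 : (y :: B).countP (fun z => decide (κ z = c)) + 1 = n := by
        rw [← hcount, hγeq, List.countP_append, hA0, e1]
        omega
      -- the recursion step
      have finish : ∀ γ₂ : List V, EdgePathFrom Γ γ₂ v w →
          γ₂.countP (fun z => decide (κ z = c)) < n →
          EdgeEquiv Γ (v :: t) γ₂ →
          ∃ γ', EdgePathFrom (res κ Γ (T.erase c)) γ' v w ∧ EdgeEquiv Γ (v :: t) γ' := by
        intro γ₂ h₂ hlt he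
        obtain ⟨γ', hγ', he'⟩ := IH _ hlt γ₂ v w rfl h₂ hv hw
        exact ⟨γ', hγ', Relation.EqvGen.trans _ _ _ he he'⟩
      -- single contraction construction
      have single : ({x, y} : Finset V) ∈ Γ → ({x, u, y} : Finset V) ∈ Γ →
          ∃ γ', EdgePathFrom (res κ Γ (T.erase c)) γ' v w ∧ EdgeEquiv Γ (v :: t) γ' := by
        intro hxy hmem
        refine finish (A ++ x :: y :: B) ⟨⟨?_, ?_⟩, ?_, ?_⟩ ?_ ?_
        · simp; omega
        · have hc2 := chain'_glue (l := [y]) hch'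
            (List.isChain_cons_cons.2 ⟨hxy, List.isChain_singleton y⟩) (by simp)
          rw [show A ++ x :: [y] ++ B = A ++ x :: y :: B from by simp] at hc2
          exact hc2
        · rw [head?_congr A x (y :: B) (u :: y :: B), ← hγeq]
          exact hhead
        · have hMy : (A ++ [x, y]).getLast? = some y := by
            rw [List.getLast?_append_of_ne_nil _ (by simp)]; simp
          have hMy' : (A ++ [x, u, y]).getLast? = some y := by
            rw [List.getLast?_append_of_ne_nil _ (by simp)]; simp
          have hgl := getLast?_congr B hMy hMy'
          rw [show (A ++ [x, y]) ++ B = A ++ x :: y :: B from by simp,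
            show (A ++ [x, u, y]) ++ B = A ++ x :: u :: y :: B from by simp, ← hγeq] at hgl
          rw [hgl]; exact hlast
        · have hcc : (A ++ x :: y :: B).countP (fun z => decide (κ z = c))
              = (y :: B).countP (fun z => decide (κ z = c)) := by
            rw [List.countP_append, hA0, List.countP_cons]
            simp [hx]
          omega
        · rw [hγeq]
          exact Relation.EqvGen.rel _ _ (SimpleEquiv.contract A B x u y hmem)
      by_cases hy : κ y = c
      · -- u = y : degenerate, contract directly
        have huy_eq : u = y := h.inj _ huy (by simp) (by simp) (by rw [hu, hy])
        refine single ?_ ?_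
        · rw [← huy_eq]; exact hxu
        · have e : ({x, u, y} : Finset V) = {x, u} := by
            rw [← huy_eq]; ext z; simp
          rw [e]; exact hxu
      · -- detour through the link of u
        have hu1 : ({u} : Finset V) ∈ Γ := h.sub _ hxu _ (by intro z hz; simp at hz; simp [hz])
        have hconn := h.conn {u} hu1 (by simp only [Finset.card_singleton]; omega)
        have hxlk : ({x} : Finset V) ∈ link Γ ({u} : Finset V) := by
          refine ⟨h.sub _ hxu _ (by intro z hz; simp at hz; simp [hz]), ?_, ?_⟩
          · rw [Finset.disjoint_singleton]
            exact fun he => hx (he ▸ hu)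
          · rw [← Finset.insert_eq]
            rwa [Finset.pair_comm] at hxu
        have hylk : ({y} : Finset V) ∈ link Γ ({u} : Finset V) := by
          refine ⟨h.sub _ huy _ (by intro z hz; simp at hz; simp [hz]), ?_, ?_⟩
          · rw [Finset.disjoint_singleton]
            exact fun he => hy (he ▸ hu)
          · rwa [← Finset.insert_eq]
        obtain ⟨l, hchain, hlastl⟩ := List.exists_isChain_cons_of_relationReflTransGen (hconn x y hxlk hylk)
        cases l with
        | nil =>
          have hxy : x = y := by simpa using hlastl
          refine single ?_ ?_
          · rw [← hxy]
            have e : ({x, x} : Finset V) = {x} := by ext z; simp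
            rw [e]
            exact h.sub _ hxu _ (by intro z hz; simp at hz; simp [hz])
          · rw [← hxy]
            have e : ({x, u, x} : Finset V) = {x, u} := by ext z; simp; tauto
            rw [e]; exact hxu
        | cons w₁ l' =>
          have hlast? : (x :: w₁ :: l').getLast? = some y := by
            rw [List.getLast?_eq_getLast (l := x :: w₁ :: l') (by simp), hlastl]
          have hgoodl : ∀ z ∈ (w₁ :: l'), κ z ≠ c := by
            intro z hz
            refine List.IsChain.cons_induction (fun z => κ z ≠ c) _ hchain ?_ hx z hz
            intro p q hpq _
            exact hu ▸ (link_edge_colors h hpq).2.2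
          have hchainE : List.Chain' (fun a b => ({a, b} : Finset V) ∈ Γ) (x :: w₁ :: l') :=
            List.Chain.imp (fun a b hab => hab.1) hchain
          refine finish (A ++ x :: (w₁ :: l') ++ B) ⟨⟨?_, ?_⟩, ?_, ?_⟩ ?_ ?_
          · simp; omega
          · exact chain'_glue hch' hchainE hlast?
          · rw [show (A ++ (x :: w₁ :: l')) ++ B = A ++ x :: (w₁ :: (l' ++ B)) from by simp,
              head?_congr A x (w₁ :: (l' ++ B)) (u :: y :: B), ← hγeq]
            exact hhead
          · have hMy : (A ++ (x :: w₁ :: l')).getLast? = some y := by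
              rw [List.getLast?_append_of_ne_nil _ (by simp), hlast?]
            have hMy' : (A ++ [x, u, y]).getLast? = some y := by
              rw [List.getLast?_append_of_ne_nil _ (by simp)]; simp
            have hgl := getLast?_congr B hMy hMy'
            rw [show (A ++ [x, u, y]) ++ B = A ++ x :: u :: y :: B from by simp, ← hγeq] at hgl
            rw [hgl]
            exact hlast
          · have h20 : (x :: w₁ :: l').countP (fun z => decide (κ z = c)) = 0 := by
              refine List.countP_eq_zero.2 ?_
              intro z hz
              rcases List.mem_cons.1 hz with rfl | hz'
              · simpa using hx
              · simpa using hgoodl z hz'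
            have hyB : (y :: B).countP (fun z => decide (κ z = c))
                = B.countP (fun z => decide (κ z = c)) := by
              rw [List.countP_cons]; simp [hy]
            have hcc : (A ++ x :: (w₁ :: l') ++ B).countP (fun z => decide (κ z = c))
                = B.countP (fun z => decide (κ z = c)) := by
              rw [show A ++ x :: (w₁ :: l') ++ B = A ++ ((x :: w₁ :: l') ++ B) from by simp,
                List.countP_append, List.countP_append, hA0, h20]
              omega
            omega
          · rw [hγeq]
            exact detour_equiv (w₁ :: l') x y A B (by simp) hchain hlast?
  intro γ v w hγ hv hw
  exact main _ γ v w rfl hγ hv hw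

end Stmt5
end A4
section A5
namespace Stmt5

lemma good_univ {V : Type*} [Fintype V] [DecidableEq V] {d : ℕ} {Δ : Set (Finset V)}
    {κ : V → Fin d} (hcplx : IsComplex Δ) (hdim : HasDim Δ d) (hI : IsPure Δ d)
    (hII : IsBalanced Δ κ) (hIII : LinksConn Δ d) :
    Good κ Δ (Finset.univ : Finset (Fin d)) where
  sub := hcplx.1
  emp := by
    obtain ⟨F, hF, _⟩ := hdim.2
    exact hcplx.1 F hF ∅ (Finset.empty_subset F)
  colors := fun F _ x _ => Finset.mem_univ _
  inj := hII
  extend := by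
    intro F hF c _ hno
    obtain ⟨G, hFG, hGΔ, hGcard⟩ : ∃ G, F ⊆ G ∧ G ∈ Δ ∧ G.card = d := by
      have hfin : {G | G ∈ Δ ∧ F ⊆ G}.Finite := Set.toFinite _
      have hne : {G | G ∈ Δ ∧ F ⊆ G}.Nonempty := ⟨F, hF, subset_refl F⟩
      obtain ⟨G, hG, hmax⟩ := Set.Finite.exists_maximalFor Finset.card _ hfin hne
      have hfacet : IsFacet Δ G := by
        refine ⟨hG.1, ?_⟩
        intro G' hG' hsub
        have h1 : G.card ≤ G'.card := Finset.card_le_card hsub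
        have h2 := hmax (j := G') ⟨hG', hG.2.trans hsub⟩ h1
        exact (Finset.eq_of_subset_of_card_le hsub h2).symm
      exact ⟨G, hG.2, hG.1, hI G hfacet⟩
    have himg : G.image κ = Finset.univ := by
      apply Finset.eq_of_subset_of_card_le (Finset.subset_univ _)
      rw [Finset.card_image_of_injOn (hII G hGΔ), hGcard, Finset.card_univ, Fintype.card_fin]
    have hcmem : c ∈ G.image κ := himg ▸ Finset.mem_univ c
    obtain ⟨z, hzG, hzc⟩ := Finset.mem_image.1 hcmem
    exact ⟨z, hzc, hcplx.1 G hGΔ _ (Finset.insert_subset hzG hFG)⟩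
  conn := by
    intro F hF hcard
    apply hIII F hF
    rwa [Finset.card_univ, Fintype.card_fin] at hcard

lemma main_aux {V : Type*} [DecidableEq V] {d : ℕ} {κ : V → Fin d} {Δ : Set (Finset V)}
    (hG : Good κ Δ Finset.univ) {S : Finset (Fin d)} (hS : S.card = 2) :
    ∀ (n : ℕ) (T : Finset (Fin d)), S ⊆ T → (T \ S).card = n →
      ∀ (γ : List V) (v w : V), EdgePathFrom (res κ Δ T) γ v w → κ v ∈ S → κ w ∈ S →
      ∃ γ', EdgePathFrom (res κ Δ S) γ' v w ∧ EdgeEquiv (res κ Δ T) γ γ' := by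
  intro n
  induction n with
  | zero =>
    intro T hST hc γ v w hγ _ _
    have hTS : T = S := Finset.Subset.antisymm
      (by rwa [← Finset.sdiff_eq_empty_iff_subset, ← Finset.card_eq_zero]) hST
    subst hTS
    exact ⟨γ, hγ, Relation.EqvGen.refl γ⟩
  | succ n IH =>
    intro T hST hc γ v w hγ hv hw
    have hne : (T \ S).Nonempty := by
      rw [← Finset.card_pos, hc]; omega
    obtain ⟨c, hcm⟩ := hne
    rw [Finset.mem_sdiff] at hcm
    have hTG : Good κ (res κ Δ T) T := hG.resGood (Finset.subset_univ T)
    have h3 : 3 ≤ T.card := by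
      have hins : insert c S ⊆ T := Finset.insert_subset hcm.1 hST
      have h4 := Finset.card_le_card hins
      rw [Finset.card_insert_of_notMem hcm.2, hS] at h4
      omega
    have hv' : κ v ≠ c := fun he => hcm.2 (he ▸ hv)
    have hw' : κ w ≠ c := fun he => hcm.2 (he ▸ hw)
    obtain ⟨γ₁, hγ₁, heq₁⟩ := desaturate hTG h3 c γ v w hγ hv' hw'
    have hers : T.erase c ⊆ T := fun z hz => Finset.mem_of_mem_erase hz
    rw [res_res κ Δ hers] at hγ₁
    have hS' : S ⊆ T.erase c := Finset.subset_erase.2 ⟨hST, hcm.2⟩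
    have hc' : ((T.erase c) \ S).card = n := by
      have e : (T.erase c) \ S = (T \ S).erase c := by
        ext a; simp only [Finset.mem_erase, Finset.mem_sdiff]; tauto
      rw [e, Finset.card_erase_of_mem (Finset.mem_sdiff.2 hcm), hc]
      omega
    obtain ⟨γ', hγ', heq₂⟩ := IH (T.erase c) hS' hc' γ₁ v w hγ₁ hv hw
    exact ⟨γ', hγ', Relation.EqvGen.trans _ _ _ heq₁
      (edgeEquiv_mono (res_mono κ Δ hers) heq₂)⟩

end Stmt5
end A5
/-- If `Δ` is a `(d-1)`-dimensional simplicial complex, `d ≥ 2`,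
satisfying properties (I)–(III), `S` a set of two colors, and `v, v'` are vertices of
`Δ_S`, then every edge path in `Δ` from `v` to `v'` is equivalent to an edge path from
`v` to `v'` all of whose edges lie in `Δ_S`. -/
theorem edgePath_equiv_rankSel {V : Type*} [Fintype V] [DecidableEq V] (d : ℕ)
    (hd : 2 ≤ d) (Δ : Set (Finset V)) (κ : V → Fin d)
    (hcplx : IsComplex Δ) (hdim : HasDim Δ d)
    (hI : IsPure Δ d) (hII : IsBalanced Δ κ) (hIII : LinksConn Δ d)
    (S : Finset (Fin d)) (hS : S.card = 2)
    (v v' : V) (hv : ({v} : Finset V) ∈ rankSel Δ κ S)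
    (hv' : ({v'} : Finset V) ∈ rankSel Δ κ S)
    (γ : List V) (hγ : EdgePathFrom Δ γ v v') :
    ∃ γ' : List V, EdgePathFrom (rankSel Δ κ S) γ' v v' ∧ EdgeEquiv Δ γ γ' := by
  have hG : Stmt5.Good κ Δ Finset.univ := Stmt5.good_univ hcplx hdim hI hII hIII
  have hres : Stmt5.res κ Δ Finset.univ = Δ :=
    Stmt5.res_eq_self κ (fun F _ x _ => Finset.mem_univ _)
  have hv1 : κ v ∈ S := hv.2 v (Finset.mem_singleton_self v)
  have hv2 : κ v' ∈ S := hv'.2 v' (Finset.mem_singleton_self v')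
  have hγ' : EdgePathFrom (Stmt5.res κ Δ Finset.univ) γ v v' := by rw [hres]; exact hγ
  obtain ⟨γ', hp, he⟩ := Stmt5.main_aux hG hS (Finset.univ \ S).card Finset.univ
    (Finset.subset_univ S) rfl γ v v' hγ' hv1 hv2
  refine ⟨γ', hp, ?_⟩
  rwa [hres] at he
end

section
/- Let Δ be a (d−1)-dimensional simplicial complex with d ≥ 2 satisfying properties (I)–(III), let S ⊆ {1,…,d} with |S| = 2, and let v_0 be a vertex of Δ_S. Then every equivalence class in the edge-path group E(Δ, v_0) can be represented by a closed edge path at v_0 all of whose edges lie in Δ_S. -/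
section AuxEPG

open List Finset

variable {V : Type*} [DecidableEq V]

private lemma epg_pair_self (u : V) : ({u, u} : Finset V) = {u} := by simp

private lemma epg_tri1 (p q w : V) : ({p} : Finset V) ∪ {q, w} = {q, p, w} := by
  ext t; simp

private lemma epg_pair_union (p q : V) : ({p} : Finset V) ∪ {q} = {p, q} := by ext t; simp

private lemma epg_tri_sub (x y z : V) : ({x, z} : Finset V) ⊆ {x, y, z} := by
  intro t ht; simp at ht ⊢; tauto

private lemma epg_tri_sub' (x y z : V) : ({x, y} : Finset V) ⊆ {x, y, z} := by
  intro t ht; simp at ht ⊢; tauto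

private lemma epg_tri_sub'' (x y z : V) : ({y, z} : Finset V) ⊆ {x, y, z} := by
  intro t ht; simp at ht ⊢; tauto

private lemma epg_chain'_iff {R : V → V → Prop} {l : List V} :
    List.Chain' R l ↔ List.IsChain R l := Iff.rfl

/-- Auxiliary "relative complex" notion, stable under links. -/
structure EpgGood {d : ℕ} (κ : V → Fin d) (Δ : Set (Finset V)) (C : Finset (Fin d)) :
    Prop where
  down : ∀ F ∈ Δ, ∀ G ⊆ F, G ∈ Δ
  extend : ∀ G ∈ Δ, ∃ F ∈ Δ, G ⊆ F ∧ F.card = C.card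
  colors : ∀ F ∈ Δ, ∀ v ∈ F, κ v ∈ C
  inj : ∀ F ∈ Δ, Set.InjOn κ ↑F
  conn : ∀ F ∈ Δ, F.card < C.card - 1 → Conn (link Δ F)

private lemma epg_link_link {Δ : Set (Finset V)} (hdown : ∀ F ∈ Δ, ∀ G ⊆ F, G ∈ Δ)
    {b : V} {F : Finset V} (hF : F ∈ link Δ {b}) :
    link (link Δ {b}) F = link Δ ({b} ∪ F) := by
  obtain ⟨hFΔ, hdisj, hbF⟩ := hF
  ext G
  constructor
  · rintro ⟨⟨hG, hbG, hbG'⟩, hFG, hFGΔ, hbFG, hbFG'⟩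
    refine ⟨hG, ?_, by rwa [← Finset.union_assoc] at hbFG'⟩
    rw [Finset.disjoint_union_left]; exact ⟨hbG, hFG⟩
  · rintro ⟨hG, hdisjG, hu⟩
    rw [Finset.disjoint_union_left] at hdisjG
    have hu' : {b} ∪ (F ∪ G) ∈ Δ := by rwa [← Finset.union_assoc]
    refine ⟨⟨hG, hdisjG.1, ?_⟩, hdisjG.2, ?_, ?_, hu'⟩
    · exact hdown _ hu' ({b} ∪ G) (Finset.union_subset_union_right (Finset.subset_union_right))
    · exact hdown _ hu' (F ∪ G) (Finset.subset_union_right)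
    · rw [Finset.disjoint_union_right]; exact ⟨hdisj, hdisjG.1⟩

private lemma epg_goodLink {d : ℕ} {κ : V → Fin d} {Δ : Set (Finset V)} {C : Finset (Fin d)}
    (hG : EpgGood κ Δ C) {b : V} (hb : ({b} : Finset V) ∈ Δ) :
    EpgGood κ (link Δ {b}) (C.erase (κ b)) := by
  have hbC : κ b ∈ C := hG.colors _ hb b (Finset.mem_singleton_self b)
  have hcard : (C.erase (κ b)).card = C.card - 1 := Finset.card_erase_of_mem hbC
  refine ⟨?_, ?_, ?_, ?_, ?_⟩
  · rintro F ⟨hF, hdF, huF⟩ G hGF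
    exact ⟨hG.down F hF G hGF, hdF.mono_right (Finset.le_iff_subset.mpr hGF),
      hG.down _ huF ({b} ∪ G) (Finset.union_subset_union_right hGF)⟩
  · rintro G₁ ⟨hG₁, hdG₁, huG₁⟩
    obtain ⟨F, hF, hsub, hc⟩ := hG.extend _ huG₁
    have hbF : b ∈ F := hsub (Finset.mem_union_left _ (Finset.mem_singleton_self b))
    refine ⟨F.erase b, ⟨hG.down F hF _ (Finset.erase_subset b F), ?_, ?_⟩, ?_, ?_⟩
    · rw [Finset.disjoint_singleton_left]; exact Finset.notMem_erase b F
    · rw [show ({b} : Finset V) ∪ F.erase b = insert b (F.erase b) from by ext t; simp,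
        Finset.insert_erase hbF]; exact hF
    · rw [Finset.subset_erase]
      refine ⟨(Finset.union_subset_iff.mp hsub).2, ?_⟩
      rw [Finset.disjoint_singleton_left] at hdG₁; exact hdG₁
    · rw [Finset.card_erase_of_mem hbF, hc, hcard]
  · rintro F ⟨hF, hdF, huF⟩ v hv
    have hvF : v ∈ ({b} : Finset V) ∪ F := Finset.mem_union_right _ hv
    have hvb : v ≠ b := by
      rintro rfl
      rw [Finset.disjoint_singleton_left] at hdF; exact hdF hv
    refine Finset.mem_erase.mpr ⟨?_, hG.colors _ huF v hvF⟩
    intro hκ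
    exact hvb (hG.inj _ huF (by exact_mod_cast hvF)
      (by exact_mod_cast Finset.mem_union_left _ (Finset.mem_singleton_self b)) hκ)
  · rintro F ⟨hF, _, _⟩; exact hG.inj F hF
  · rintro F hF hFc
    rw [epg_link_link hG.down hF]
    obtain ⟨hFΔ, hdF, huF⟩ := hF
    have hcu : (({b} : Finset V) ∪ F).card = F.card + 1 := by
      rw [Finset.card_union_of_disjoint hdF]; simp [Nat.add_comm]
    refine hG.conn _ huF ?_
    rw [hcard] at hFc
    omega

/-- The key walk lemma: any two vertices are joined by a walk whose interior
vertices all have colors in `T`. -/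
private lemma epg_walk {d : ℕ} {κ : V → Fin d} :
    ∀ (n : ℕ) (Δ : Set (Finset V)) (C : Finset (Fin d)), C.card ≤ n → EpgGood κ Δ C →
    ∀ (T : Finset (Fin d)), T ⊆ C → T.card = 2 →
    ∀ u w : V, ({u} : Finset V) ∈ Δ → ({w} : Finset V) ∈ Δ →
    ∃ l : List V, List.Chain' (fun a b => ({a, b} : Finset V) ∈ Δ) (u :: l ++ [w]) ∧
      ∀ x ∈ l, κ x ∈ T := by
  intro n
  induction n with
  | zero =>
    intro Δ C hC hG T hTC hT2 u w hu hw
    have := Finset.card_le_card hTC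
    omega
  | succ n ih =>
    intro Δ C hC hG T hTC hT2 u w hu hw
    have hC2 : 2 ≤ C.card := hT2 ▸ Finset.card_le_card hTC
    have hempty : (∅ : Finset V) ∈ Δ := hG.down _ hu ∅ (Finset.empty_subset _)
    have hconn := hG.conn ∅ hempty (by simpa using (by omega : (0:ℕ) < C.card - 1))
    have hlink : link Δ (∅ : Finset V) = Δ := by ext G; simp [link]
    rw [hlink] at hconn
    have hwalk : Relation.ReflTransGen (fun a b => ({a, b} : Finset V) ∈ Δ) u w :=
      hconn u w hu hw
    clear hconn hw hempty
    induction hwalk with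
    | refl =>
      refine ⟨[], ?_, by simp⟩
      simpa [epg_chain'_iff, epg_pair_self] using hu
    | @tail b c hub hbc ih2 =>
      obtain ⟨l, hl, hlT⟩ := ih2
      have hb1 : ({b} : Finset V) ∈ Δ := hG.down _ hbc {b} (by
        intro t ht; simp at ht; simp [ht])
      by_cases hbT : κ b ∈ T
      · refine ⟨l ++ [b], ?_, ?_⟩
        · rw [show u :: (l ++ [b]) ++ [c] = (u :: l ++ [b]) ++ [c] by simp]
          rw [epg_chain'_iff, List.isChain_append]
          refine ⟨hl, by simp, ?_⟩
          intro x hx y hy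
          simp at hy
          have hx' : x = b := by
            rw [show u :: l ++ [b] = (u :: l) ++ [b] from rfl, List.getLast?_append] at hx
            simp at hx; exact hx.symm
          rw [hx', ← hy]; exact hbc
        · intro x hx
          rcases List.mem_append.mp hx with h | h
          · exact hlT x h
          · simp at h; rw [h]; exact hbT
      · by_cases hcb : c = b
        · exact ⟨l, hcb ▸ hl, hlT⟩
        · have hne : (u :: l) ≠ [] := by simp
          set q := (u :: l).getLast hne with hq
          have hlast : (u :: l).getLast? = some q := List.getLast?_eq_getLast hne
          have hl' : List.Chain' (fun a b => ({a, b} : Finset V) ∈ Δ) (u :: l) ∧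
              ({q, b} : Finset V) ∈ Δ := by
            rw [show u :: l ++ [b] = (u :: l) ++ [b] from rfl, epg_chain'_iff, List.isChain_append] at hl
            refine ⟨hl.1, ?_⟩
            exact hl.2.2 q (by rw [hlast]; rfl) b (by simp)
          by_cases hqb : q = b
          · refine ⟨l, ?_, hlT⟩
            rw [show u :: l ++ [c] = (u :: l) ++ [c] from rfl, epg_chain'_iff, List.isChain_append]
            refine ⟨hl'.1, by simp, ?_⟩
            intro x hx y hy
            simp at hy
            rw [hlast] at hx; simp at hx
            rw [← hx, ← hy, hqb]; exact hbc
          · -- recursive call in the link of b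
            have hgood' := epg_goodLink hG hb1
            have hkbC : κ b ∈ C := hG.colors _ hb1 b (Finset.mem_singleton_self b)
            have hcard' : (C.erase (κ b)).card ≤ n := by
              rw [Finset.card_erase_of_mem hkbC]; omega
            have hTC' : T ⊆ C.erase (κ b) := fun t ht =>
              Finset.mem_erase.mpr ⟨fun h => hbT (h ▸ ht), hTC ht⟩
            have hq1 : ({q} : Finset V) ∈ link Δ {b} := by
              refine ⟨hG.down _ hl'.2 {q} (by intro t ht; simp at ht; simp [ht]), ?_, ?_⟩
              · rw [Finset.disjoint_singleton_left]; simp [Ne.symm hqb]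
              · rw [epg_pair_union]; rw [Finset.pair_comm]; exact hl'.2
            have hc1 : ({c} : Finset V) ∈ link Δ {b} := by
              refine ⟨hG.down _ hbc {c} (by intro t ht; simp at ht; simp [ht]), ?_, ?_⟩
              · rw [Finset.disjoint_singleton_left]; simp [Ne.symm hcb]
              · rw [epg_pair_union]; exact hbc
            obtain ⟨l₂, hl₂, hl₂T⟩ :=
              ih (link Δ {b}) (C.erase (κ b)) hcard' hgood' T hTC' hT2 q c hq1 hc1
            have hl₂' : List.Chain' (fun a b => ({a, b} : Finset V) ∈ Δ) (q :: l₂ ++ [c]) :=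
              hl₂.imp (fun a b hab => hab.1)
            refine ⟨l ++ l₂, ?_, ?_⟩
            · rw [show u :: (l ++ l₂) ++ [c] = (u :: l) ++ (l₂ ++ [c]) by simp]
              rw [epg_chain'_iff, List.isChain_append]
              refine ⟨hl'.1, hl₂'.tail, ?_⟩
              intro x hx y hy
              rw [hlast] at hx; simp at hx
              rw [← hx]
              exact (List.isChain_cons.mp hl₂').1 y hy
            · intro x hx
              rcases List.mem_append.mp hx with h | h
              · exact hlT x h
              · exact hl₂T x h

private lemma epg_tri2 (p q x : V) : ({p} : Finset V) ∪ {q, x} = {q, x, p} := by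
  ext t; simp; tauto

/-- Homotopy lemma: the segment `q, p, w` is edge-equivalent to any walk from `q`
to `w` in the link of `p`. -/
private lemma epg_linkWalk_equiv {Δ : Set (Finset V)} (p : V) :
    ∀ (l₂ : List V) (A B : List V) (q w : V),
      List.Chain' (fun a b => ({a, b} : Finset V) ∈ link Δ {p}) (q :: l₂ ++ [w]) →
      EdgeEquiv Δ (A ++ q :: p :: w :: B) (A ++ q :: (l₂ ++ w :: B)) := by
  intro l₂
  induction l₂ with
  | nil =>
    intro A B q w h
    have h1 : ({q, w} : Finset V) ∈ link Δ {p} := (List.isChain_cons_cons.mp h).1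
    have htri : ({q, p, w} : Finset V) ∈ Δ := by
      have := h1.2.2
      rwa [epg_tri1] at this
    exact Relation.EqvGen.rel _ _ (SimpleEquiv.contract A B q p w htri)
  | cons x l ihl =>
    intro A B q w h
    have hqx : ({q, x} : Finset V) ∈ link Δ {p} := (List.isChain_cons_cons.mp h).1
    have htri : ({q, x, p} : Finset V) ∈ Δ := by
      have := hqx.2.2
      rwa [epg_tri2] at this
    have se : SimpleEquiv Δ (A ++ q :: x :: p :: w :: B) (A ++ q :: p :: w :: B) :=
      SimpleEquiv.contract A (w :: B) q x p htri
    have ih' := ihl (A ++ [q]) B x w ((List.isChain_cons_cons.mp h).2)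
    have e1 : (A ++ [q]) ++ x :: p :: w :: B = A ++ q :: x :: p :: w :: B := by simp
    have e2 : (A ++ [q]) ++ x :: (l ++ w :: B) = A ++ q :: (x :: l ++ w :: B) := by simp
    rw [e1, e2] at ih'
    exact Relation.EqvGen.trans _ _ _
      (Relation.EqvGen.symm _ _ (Relation.EqvGen.rel _ _ se)) ih'

/-- Simple equivalences preserve being an edge path, and the endpoints. -/
private lemma epg_simpleEquiv_path {Δ : Set (Finset V)}
    (hdown : ∀ F ∈ Δ, ∀ G ⊆ F, G ∈ Δ) {γ γ' : List V} (h : SimpleEquiv Δ γ γ') :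
    (IsEdgePath Δ γ ↔ IsEdgePath Δ γ') ∧ γ.head? = γ'.head? ∧ γ.getLast? = γ'.getLast? := by
  obtain ⟨a, b, x, y, z, hxyz⟩ := h
  refine ⟨?_, ?_, ?_⟩
  · constructor
    · rintro ⟨hlen, hch⟩
      refine ⟨by simp; omega, ?_⟩
      rw [epg_chain'_iff, List.isChain_append] at hch ⊢
      refine ⟨hch.1, ?_, ?_⟩
      · rw [List.isChain_cons_cons]
        have h2 := hch.2.1
        rw [List.isChain_cons_cons, List.isChain_cons_cons] at h2
        exact ⟨hdown _ hxyz _ (epg_tri_sub x y z), h2.2.2⟩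
      · intro t ht u hu
        refine hch.2.2 t ht u ?_
        simp at hu ⊢; exact hu
    · rintro ⟨hlen, hch⟩
      refine ⟨by simp; omega, ?_⟩
      rw [epg_chain'_iff, List.isChain_append] at hch ⊢
      refine ⟨hch.1, ?_, ?_⟩
      · rw [List.isChain_cons_cons, List.isChain_cons_cons]
        have h2 := hch.2.1
        rw [List.isChain_cons_cons] at h2
        exact ⟨hdown _ hxyz _ (epg_tri_sub' x y z),
          hdown _ hxyz _ (epg_tri_sub'' x y z), h2.2⟩
      · intro t ht u hu
        refine hch.2.2 t ht u ?_
        simp at hu ⊢; exact hu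
  · rw [List.head?_append, List.head?_append]; rfl
  · rw [show a ++ x :: y :: z :: b = (a ++ [x, y]) ++ z :: b by simp,
      show a ++ x :: z :: b = (a ++ [x]) ++ z :: b by simp]
    simp only [List.getLast?_append]
    obtain ⟨t, ht⟩ : ∃ t, (z :: b).getLast? = some t :=
      ⟨_, List.getLast?_eq_getLast (by simp)⟩
    rw [ht]; rfl

private lemma epg_edgeEquiv_path {Δ : Set (Finset V)}
    (hdown : ∀ F ∈ Δ, ∀ G ⊆ F, G ∈ Δ) {γ γ' : List V} (h : EdgeEquiv Δ γ γ') :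
    (IsEdgePath Δ γ ↔ IsEdgePath Δ γ') ∧ γ.head? = γ'.head? ∧ γ.getLast? = γ'.getLast? := by
  induction h with
  | rel _ _ h => exact epg_simpleEquiv_path hdown h
  | refl _ => exact ⟨Iff.rfl, rfl, rfl⟩
  | symm _ _ _ ih => exact ⟨ih.1.symm, ih.2.1.symm, ih.2.2.symm⟩
  | trans _ _ _ _ _ ih1 ih2 =>
    exact ⟨ih1.1.trans ih2.1, ih1.2.1.trans ih2.2.1, ih1.2.2.trans ih2.2.2⟩

private lemma epg_chain_rankSel {d : ℕ} {κ : V → Fin d} {Δ : Set (Finset V)}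
    {S : Finset (Fin d)} :
    ∀ (l : List V), (∀ x ∈ l, κ x ∈ S) →
      List.Chain' (fun a b => ({a, b} : Finset V) ∈ Δ) l →
      List.Chain' (fun a b => ({a, b} : Finset V) ∈ rankSel Δ κ S) l := by
  intro l
  induction l with
  | nil => intro _ _; exact List.isChain_nil
  | cons a t iht =>
    intro hmem hch
    cases t with
    | nil => exact List.isChain_singleton _
    | cons b t' =>
      rw [epg_chain'_iff, List.isChain_cons_cons] at hch ⊢
      refine ⟨⟨hch.1, ?_⟩, iht (fun x hx => hmem x (by simp [hx])) hch.2⟩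
      intro v hv
      rcases Finset.mem_insert.mp hv with rfl | hv'
      · exact hmem v (by simp)
      · rw [Finset.mem_singleton.mp hv']
        exact hmem b (by simp)

private lemma epg_baseCase {d : ℕ} {κ : V → Fin d} {Δ : Set (Finset V)}
    {S : Finset (Fin d)} {v₀ : V} {γ : List V} (hγ : EdgePathFrom Δ γ v₀ v₀)
    (hall : ∀ x ∈ γ, κ x ∈ S) : EdgePathFrom (rankSel Δ κ S) γ v₀ v₀ :=
  ⟨⟨hγ.1.1, epg_chain_rankSel γ hall hγ.1.2⟩, hγ.2.1, hγ.2.2⟩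

private lemma epg_main {d : ℕ} {κ : V → Fin d} {Δ : Set (Finset V)}
    (hgood : EpgGood κ Δ Finset.univ)
    {S : Finset (Fin d)} (hS : S.card = 2) {v₀ : V} (hv₀S : κ v₀ ∈ S) :
    ∀ (n : ℕ) (γ : List V), γ.countP (fun x => decide (κ x ∉ S)) ≤ n →
      EdgePathFrom Δ γ v₀ v₀ →
      ∃ γ', EdgePathFrom (rankSel Δ κ S) γ' v₀ v₀ ∧ EdgeEquiv Δ γ γ' := by
  intro n
  induction n with
  | zero =>
    intro γ hc hγ
    have h0 : ∀ x ∈ γ, κ x ∈ S := by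
      have := List.countP_eq_zero.mp (Nat.le_zero.mp hc)
      intro x hx
      have := this x hx
      simpa using this
    exact ⟨γ, epg_baseCase hγ h0, Relation.EqvGen.refl γ⟩
  | succ n ihn =>
    intro γ hc hγ
    by_cases h0 : γ.countP (fun x => decide (κ x ∉ S)) = 0
    · have hall : ∀ x ∈ γ, κ x ∈ S := by
        have := List.countP_eq_zero.mp h0
        intro x hx
        simpa using this x hx
      exact ⟨γ, epg_baseCase hγ hall, Relation.EqvGen.refl γ⟩
    · obtain ⟨p, hpγ, hpbad⟩ := List.countP_pos_iff.mp (Nat.pos_of_ne_zero h0)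
      have hpS : κ p ∉ S := by simpa using hpbad
      obtain ⟨A, B, hAB⟩ := List.append_of_mem hpγ
      have hv0head := hγ.2.1
      have hv0last := hγ.2.2
      have hA : A ≠ [] := by
        rintro rfl
        rw [hAB] at hv0head; simp at hv0head
        exact hpS (by rw [hv0head]; exact hv₀S)
      have hB : B ≠ [] := by
        rintro rfl
        rw [hAB, List.getLast?_append] at hv0last; simp at hv0last
        exact hpS (by rw [hv0last]; exact hv₀S)
      rcases List.eq_nil_or_concat A with rfl | ⟨A', q, rfl⟩
      · exact absurd rfl hA
      cases B with
      | nil => exact absurd rfl hB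
      | cons w B' =>
        have hform : γ = A' ++ q :: p :: w :: B' := by
          rw [hAB]; simp [List.concat_eq_append]
        have hch : List.Chain' (fun a b => ({a, b} : Finset V) ∈ Δ)
            (A' ++ q :: p :: w :: B') := by
          have := hγ.1.2; rwa [hform] at this
        have hsuf := (List.isChain_append.mp hch).2.1
        have hqp : ({q, p} : Finset V) ∈ Δ := (List.isChain_cons_cons.mp hsuf).1
        have hpw : ({p, w} : Finset V) ∈ Δ :=
          (List.isChain_cons_cons.mp (List.isChain_cons_cons.mp hsuf).2).1
        have finish : ∀ γ₁ : List V, EdgeEquiv Δ γ γ₁ →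
            γ₁.countP (fun x => decide (κ x ∉ S)) ≤ n →
            ∃ γ', EdgePathFrom (rankSel Δ κ S) γ' v₀ v₀ ∧ EdgeEquiv Δ γ γ' := by
          intro γ₁ heq hcnt
          obtain ⟨hiff, hh, hl⟩ := epg_edgeEquiv_path hgood.down heq
          have hpath₁ : EdgePathFrom Δ γ₁ v₀ v₀ :=
            ⟨hiff.mp hγ.1, hh.symm.trans hγ.2.1, hl.symm.trans hγ.2.2⟩
          obtain ⟨γ', hγ', heq'⟩ := ihn γ₁ hcnt hpath₁
          exact ⟨γ', hγ', Relation.EqvGen.trans _ _ _ heq heq'⟩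
        by_cases hqp' : q = p
        · have se : SimpleEquiv Δ (A' ++ p :: p :: w :: B') (A' ++ p :: w :: B') :=
            SimpleEquiv.contract A' B' p p w
              (by rw [show ({p, p, w} : Finset V) = {p, w} by ext t; simp]; exact hpw)
          have heq : EdgeEquiv Δ γ (A' ++ p :: w :: B') := by
            rw [hform, hqp']; exact Relation.EqvGen.rel _ _ se
          refine finish _ heq ?_
          have hcγ : γ.countP (fun x => decide (κ x ∉ S)) =
              (A' ++ p :: w :: B').countP (fun x => decide (κ x ∉ S)) + 1 := by
            rw [hform, hqp']
            simp only [List.countP_append, List.countP_cons, hpbad, if_true]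
            omega
          omega
        · by_cases hwp : w = p
          · have se : SimpleEquiv Δ (A' ++ q :: p :: p :: B') (A' ++ q :: p :: B') :=
              SimpleEquiv.contract A' B' q p p
                (by rw [show ({q, p, p} : Finset V) = {q, p} by ext t; simp]; exact hqp)
            have heq : EdgeEquiv Δ γ (A' ++ q :: p :: B') := by
              rw [hform, hwp]; exact Relation.EqvGen.rel _ _ se
            refine finish _ heq ?_
            have hcγ : γ.countP (fun x => decide (κ x ∉ S)) =
                (A' ++ q :: p :: B').countP (fun x => decide (κ x ∉ S)) + 1 := by
              rw [hform, hwp]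
              simp only [List.countP_append, List.countP_cons, hpbad, if_true]
              omega
            omega
          · have hp1 : ({p} : Finset V) ∈ Δ :=
              hgood.down _ hqp {p} (by intro t ht; simp at ht; simp [ht])
            have hgood' := epg_goodLink hgood hp1
            have hq1 : ({q} : Finset V) ∈ link Δ {p} := by
              refine ⟨hgood.down _ hqp {q} (by intro t ht; simp at ht; simp [ht]), ?_, ?_⟩
              · rw [Finset.disjoint_singleton_left]; simp [Ne.symm hqp']
              · rw [epg_pair_union, Finset.pair_comm]; exact hqp
            have hw1 : ({w} : Finset V) ∈ link Δ {p} := by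
              refine ⟨hgood.down _ hpw {w} (by intro t ht; simp at ht; simp [ht]), ?_, ?_⟩
              · rw [Finset.disjoint_singleton_left]; simp [Ne.symm hwp]
              · rw [epg_pair_union]; exact hpw
            have hSsub : S ⊆ Finset.univ.erase (κ p) := fun s hs =>
              Finset.mem_erase.mpr ⟨fun h => hpS (h ▸ hs), Finset.mem_univ s⟩
            obtain ⟨l₂, hl₂, hl₂T⟩ := epg_walk d (link Δ {p}) (Finset.univ.erase (κ p))
              (by rw [Finset.card_erase_of_mem (Finset.mem_univ _), Finset.card_univ,
                  Fintype.card_fin]; omega)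
              hgood' S hSsub hS q w hq1 hw1
            have heqv : EdgeEquiv Δ γ (A' ++ q :: (l₂ ++ w :: B')) := by
              rw [hform]; exact epg_linkWalk_equiv p l₂ A' B' q w hl₂
            refine finish _ heqv ?_
            have hl₂0 : l₂.countP (fun x => decide (κ x ∉ S)) = 0 :=
              List.countP_eq_zero.mpr (fun a ha => by simp [hl₂T a ha])
            have hcγ : γ.countP (fun x => decide (κ x ∉ S)) =
                (A' ++ q :: (l₂ ++ w :: B')).countP (fun x => decide (κ x ∉ S)) + 1 := by
              rw [hform]
              simp only [List.countP_append, List.countP_cons, hpbad, if_true, hl₂0]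
              omega
            omega

end AuxEPG

/-- If `Δ` is a `(d-1)`-dimensional simplicial complex, `d ≥ 2`,
satisfying properties (I)–(III), `S` a set of two colors, and `v₀` a vertex of `Δ_S`,
then every equivalence class in the edge-path group `E(Δ, v₀)` is represented by a
closed edge path at `v₀` all of whose edges lie in `Δ_S`. -/
theorem edgePathGroup_rep_rankSel {V : Type*} [Fintype V] [DecidableEq V] (d : ℕ)
    (hd : 2 ≤ d) (Δ : Set (Finset V)) (κ : V → Fin d)
    (hcplx : IsComplex Δ) (hdim : HasDim Δ d)
    (hI : IsPure Δ d) (hII : IsBalanced Δ κ) (hIII : LinksConn Δ d)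
    (S : Finset (Fin d)) (hS : S.card = 2)
    (v₀ : V) (hv₀ : ({v₀} : Finset V) ∈ rankSel Δ κ S)
    (γ : List V) (hγ : EdgePathFrom Δ γ v₀ v₀) :
    ∃ γ' : List V, EdgePathFrom (rankSel Δ κ S) γ' v₀ v₀ ∧ EdgeEquiv Δ γ γ' := by
  have hdown := hcplx.1
  have hgood : EpgGood κ Δ Finset.univ := by
    refine ⟨hdown, ?_, fun F _ v _ => Finset.mem_univ _, hII, ?_⟩
    · intro G hG
      have hfin : ({H : Finset V | H ∈ Δ ∧ G ⊆ H}).Finite := Set.toFinite _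
      obtain ⟨F, hF, hmax⟩ :=
        Set.Finite.exists_maximalFor Finset.card _ hfin ⟨G, hG, subset_rfl⟩
      refine ⟨F, hF.1, hF.2, ?_⟩
      have hfacet : IsFacet Δ F := by
        refine ⟨hF.1, ?_⟩
        intro K hK hFK
        have hKs : K ∈ {H : Finset V | H ∈ Δ ∧ G ⊆ H} := ⟨hK, hF.2.trans hFK⟩
        have hcc := hmax hKs (Finset.card_le_card hFK)
        exact (Finset.eq_of_subset_of_card_le hFK hcc).symm
      rw [hI F hfacet, Finset.card_univ, Fintype.card_fin]
    · intro F hF hcard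
      refine hIII F hF ?_
      rwa [Finset.card_univ, Fintype.card_fin] at hcard
  have hv₀S : κ v₀ ∈ S := hv₀.2 v₀ (Finset.mem_singleton_self v₀)
  exact epg_main hgood hS hv₀S _ γ le_rfl hγ
end

section
/- Let P be a simplicial poset of rank d ≥ 2 satisfying properties (i)–(iii). Then the order complex Δ(P̄) of P̄ = P ∖ {0̂} is a (d−1)-dimensional simplicial complex satisfying properties (I)–(III): it is pure, it is balanced with the coloring assigning to each vertex σ ∈ P̄ of Δ(P̄) the rank rk(σ), and the link in Δ(P̄) of every chain F with |F| < d−1 is connected. -/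
/-- `P` (a finite poset with least element `⊥`) is a simplicial poset with rank
function `rk`: every lower interval `[⊥, x]` is isomorphic to the Boolean lattice of
subsets of an `rk x`-element set. -/
def IsSimplicialPoset (P : Type*) [PartialOrder P] [OrderBot P] (rk : P → ℕ) : Prop :=
  ∀ x : P, Nonempty (Set.Icc (⊥ : P) x ≃o Finset (Fin (rk x)))

/-- `P` has rank `d`. -/
def PosetRank {P : Type*} (rk : P → ℕ) (d : ℕ) : Prop :=
  (∀ x : P, rk x ≤ d) ∧ ∃ x : P, rk x = d

/-- Property (i): `P` is pure, i.e. every facet (maximal element) has rank `d`. -/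
def PosetPure {P : Type*} [PartialOrder P] (rk : P → ℕ) (d : ℕ) : Prop :=
  ∀ x : P, IsMax x → rk x = d

/-- Property (ii): `P` is balanced with respect to the coloring `κ` of its vertices
by `d` colors: distinct vertices lying below a common facet receive distinct colors. -/
def PosetBalanced {P : Type*} [PartialOrder P] {d : ℕ} (rk : P → ℕ) (κ : P → Fin d) :
    Prop :=
  ∀ σ : P, IsMax σ → ∀ v w : P, rk v = 1 → rk w = 1 → v ≤ σ → w ≤ σ → v ≠ w → κ v ≠ κ w

/-- The link `lk_P τ = {σ ∈ P : σ ≥ τ}` is connected: any two of its vertices (the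
elements of rank `rk τ + 1` above `τ`) are joined by a path of rank-2 elements of the
link (the elements of rank `rk τ + 2` above `τ`). -/
def ConnAbove {P : Type*} [PartialOrder P] (rk : P → ℕ) (τ : P) : Prop :=
  ∀ v w : P, τ < v → rk v = rk τ + 1 → τ < w → rk w = rk τ + 1 →
    Relation.ReflTransGen
      (fun a b => τ < a ∧ τ < b ∧ rk a = rk τ + 1 ∧ rk b = rk τ + 1 ∧
        ∃ e : P, a ≤ e ∧ b ≤ e ∧ rk e = rk τ + 2) v w

/-- Property (iii): the link of every face of rank `< d - 1` (including `⊥`, so in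
particular `P` itself) is connected. -/
def PosetLinksConn {P : Type*} [PartialOrder P] (rk : P → ℕ) (d : ℕ) : Prop :=
  ∀ σ : P, rk σ < d - 1 → ConnAbove rk σ

set_option linter.unusedSectionVars false

section Aux
variable {P : Type*} [PartialOrder P] [OrderBot P] {rk : P → ℕ}

lemma sp_card (hSP : IsSimplicialPoset P rk) (x : P) :
    Nat.card (Set.Icc (⊥ : P) x) = 2 ^ rk x := by
  obtain ⟨e⟩ := hSP x
  rw [Nat.card_congr e.toEquiv, Nat.card_eq_fintype_card, Fintype.card_finset, Fintype.card_fin]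

lemma sp_rk_bot (hSP : IsSimplicialPoset P rk) : rk (⊥ : P) = 0 := by
  have h := sp_card hSP (⊥ : P)
  rw [Set.Icc_self] at h
  have h1 : Nat.card (({⊥} : Set P)) = 1 := by simp
  rw [h1] at h
  rcases Nat.eq_zero_or_pos (rk (⊥:P)) with h0 | h0
  · exact h0
  · obtain ⟨m, hm⟩ : ∃ m, rk (⊥:P) = m + 1 := ⟨rk (⊥:P) - 1, by omega⟩
    rw [hm] at h
    have := Nat.one_lt_two_pow' m
    omega

lemma sp_rk_eq_card (hSP : IsSimplicialPoset P rk) {x y : P} (hyx : y ≤ x)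
    (f : Set.Icc (⊥ : P) x ≃o Finset (Fin (rk x))) :
    rk y = (f ⟨y, bot_le, hyx⟩).card := by
  set S0 := f ⟨y, bot_le, hyx⟩ with hS0
  have key : Nat.card (Set.Icc (⊥ : P) y) = Nat.card (Set.Iic S0) := by
    apply Nat.card_congr
    refine ⟨fun z => ⟨f ⟨z.1, bot_le, z.2.2.trans hyx⟩, ?_⟩,
      fun S => ⟨(f.symm S.1).1, bot_le, ?_⟩, ?_, ?_⟩
    · exact f.le_iff_le.mpr z.2.2
    · have h5 : f.symm S0 = ⟨y, bot_le, hyx⟩ := by rw [hS0, f.symm_apply_apply]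
      have : f.symm S.1 ≤ f.symm S0 := f.symm.le_iff_le.mpr S.2
      exact Subtype.coe_le_coe.mpr (this.trans h5.le)
    · intro z
      ext
      simp
    · intro S
      ext : 1
      simp
      exact f.apply_symm_apply _
  have hIic : Set.Iic S0 = ↑S0.powerset := by
    ext z
    simp [Set.mem_Iic, Finset.le_iff_subset]
  have k1 : Nat.card (Set.Icc (⊥:P) y) = 2 ^ rk y := sp_card hSP y
  have k2 : Nat.card (↑(S0.powerset) : Set (Finset (Fin (rk x)))) = 2 ^ S0.card := by
    rw [Nat.card_coe_set_eq, Set.ncard_coe_finset, Finset.card_powerset]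
  rw [hIic, k1, k2] at key
  exact Nat.pow_right_injective le_rfl key

lemma sp_rk_lt (hSP : IsSimplicialPoset P rk) {x y : P} (h : x < y) : rk x < rk y := by
  obtain ⟨f⟩ := hSP y
  have hx := sp_rk_eq_card hSP h.le f
  have hy := sp_rk_eq_card hSP le_rfl f
  have hlt : (f ⟨x, bot_le, h.le⟩).card < (f ⟨y, bot_le, le_rfl⟩).card :=
    Finset.card_lt_card (Finset.lt_iff_ssubset.mp (f.lt_iff_lt.mpr (by exact_mod_cast h)))
  omega

lemma sp_rk_le (hSP : IsSimplicialPoset P rk) {x y : P} (h : x ≤ y) : rk x ≤ rk y := by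
  rcases h.lt_or_eq with h | rfl
  · exact (sp_rk_lt hSP h).le
  · exact le_rfl

lemma sp_rk_pos (hSP : IsSimplicialPoset P rk) {x : P} (hx : x ≠ ⊥) : 1 ≤ rk x := by
  have := sp_rk_lt hSP (bot_lt_iff_ne_bot.mpr hx)
  rw [sp_rk_bot hSP] at this
  omega

lemma sp_ne_bot (hSP : IsSimplicialPoset P rk) {x : P} (hx : 1 ≤ rk x) : x ≠ ⊥ := by
  intro h
  rw [h, sp_rk_bot hSP] at hx
  omega

lemma sp_between (hSP : IsSimplicialPoset P rk) {a b : P} (hab : a ≤ b) {j : ℕ}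
    (h1 : rk a ≤ j) (h2 : j ≤ rk b) : ∃ z, a ≤ z ∧ z ≤ b ∧ rk z = j := by
  obtain ⟨f⟩ := hSP b
  set A := f ⟨a, bot_le, hab⟩ with hA
  set B := f ⟨b, bot_le, le_rfl⟩ with hB
  have hcA : rk a = A.card := sp_rk_eq_card hSP hab f
  have hcB : rk b = B.card := sp_rk_eq_card hSP le_rfl f
  have hAB : A ⊆ B := f.le_iff_le.mpr hab
  obtain ⟨u, hAu, huB, hcard⟩ :=
    Finset.exists_subsuperset_card_eq hAB (show A.card ≤ j by omega) (show j ≤ B.card by omega)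
  refine ⟨(f.symm u).1, ?_, (f.symm u).2.2, ?_⟩
  · have : f.symm A ≤ f.symm u := f.symm.le_iff_le.mpr hAu
    rw [hA, f.symm_apply_apply] at this
    exact this
  · have h3 : rk (f.symm u).1 = (f ⟨(f.symm u).1, bot_le, (f.symm u).2.2⟩).card :=
      sp_rk_eq_card hSP (f.symm u).2.2 f
    have h4 : (⟨(f.symm u).1, bot_le, (f.symm u).2.2⟩ : Set.Icc (⊥:P) b) = f.symm u :=
      Subtype.ext rfl
    rw [h3, h4, f.apply_symm_apply, hcard]

lemma sp_join (hSP : IsSimplicialPoset P rk) {a b z1 z2 : P}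
    (h1 : a ≤ z1) (h2 : a ≤ z2) (hz1 : z1 ≤ b) (hz2 : z2 ≤ b)
    (hr1 : rk z1 = rk a + 1) (hr2 : rk z2 = rk a + 1) (hne : z1 ≠ z2) :
    ∃ e, z1 ≤ e ∧ z2 ≤ e ∧ e ≤ b ∧ rk e = rk a + 2 := by
  obtain ⟨f⟩ := hSP b
  set S1 := f ⟨z1, bot_le, hz1⟩ with hS1
  set S2 := f ⟨z2, bot_le, hz2⟩ with hS2
  set Sa := f ⟨a, bot_le, h1.trans hz1⟩ with hSa
  have hc1 : rk z1 = S1.card := sp_rk_eq_card hSP hz1 f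
  have hc2 : rk z2 = S2.card := sp_rk_eq_card hSP hz2 f
  have hca : rk a = Sa.card := sp_rk_eq_card hSP (h1.trans hz1) f
  have hsub1 : Sa ⊆ S1 := f.le_iff_le.mpr h1
  have hsub2 : Sa ⊆ S2 := f.le_iff_le.mpr h2
  have hSne : S1 ≠ S2 := by
    intro h
    apply hne
    have := f.injective (hS1 ▸ hS2 ▸ h)
    exact congrArg Subtype.val this
  have hinter : Sa ⊆ S1 ∩ S2 := Finset.subset_inter hsub1 hsub2
  have hint_ne : S1 ∩ S2 ≠ S1 := by
    intro h
    have hs12 : S1 ⊆ S2 := by rw [← h]; exact Finset.inter_subset_right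
    exact hSne (Finset.eq_of_subset_of_card_le hs12 (by omega))
  have hint_card : (S1 ∩ S2).card = Sa.card := by
    have hle : (S1 ∩ S2).card ≤ S1.card := Finset.card_le_card Finset.inter_subset_left
    have hlt : (S1 ∩ S2).card < S1.card :=
      lt_of_le_of_ne (Finset.card_le_card Finset.inter_subset_left)
        (fun h => hint_ne (Finset.eq_of_subset_of_card_le Finset.inter_subset_left h.ge))
    have hge : Sa.card ≤ (S1 ∩ S2).card := Finset.card_le_card hinter
    omega
  have hunion : (S1 ∪ S2).card = rk a + 2 := by
    have := Finset.card_union_add_card_inter S1 S2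
    omega
  refine ⟨(f.symm (S1 ∪ S2)).1, ?_, ?_, (f.symm (S1 ∪ S2)).2.2, ?_⟩
  · have : f.symm S1 ≤ f.symm (S1 ∪ S2) := f.symm.le_iff_le.mpr Finset.subset_union_left
    rw [hS1, f.symm_apply_apply] at this
    exact this
  · have : f.symm S2 ≤ f.symm (S1 ∪ S2) := f.symm.le_iff_le.mpr Finset.subset_union_right
    rw [hS2, f.symm_apply_apply] at this
    exact this
  · have h3 := sp_rk_eq_card hSP (f.symm (S1 ∪ S2)).2.2 f
    have h4 : (⟨(f.symm (S1 ∪ S2)).1, bot_le, (f.symm (S1 ∪ S2)).2.2⟩ : Set.Icc (⊥:P) b)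
        = f.symm (S1 ∪ S2) := Subtype.ext rfl
    rw [h3, h4, f.apply_symm_apply, hunion]

end Aux

section Chains

lemma chain_max {α : Type*} [PartialOrder α] {s : Finset α}
    (hs : IsChain (· ≤ ·) (↑s : Set α)) (hne : s.Nonempty) :
    ∃ m ∈ s, ∀ x ∈ s, x ≤ m := by
  obtain ⟨m, hm, hmax⟩ := s.exists_maximal hne
  refine ⟨m, hm, fun x hx => ?_⟩
  rcases eq_or_ne x m with rfl | hne'
  · exact le_rfl
  · rcases hs (Finset.mem_coe.mpr hx) (Finset.mem_coe.mpr hm) hne' with h | h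
    · exact h
    · exact absurd (lt_of_le_of_ne h (fun hh => hne' hh.symm)) (fun hlt : m < x => not_le_of_gt hlt (hmax hx hlt.le))

lemma chain_min {α : Type*} [PartialOrder α] {s : Finset α}
    (hs : IsChain (· ≤ ·) (↑s : Set α)) (hne : s.Nonempty) :
    ∃ m ∈ s, ∀ x ∈ s, m ≤ x := by
  obtain ⟨m, hm, hmin⟩ := s.exists_minimal hne
  refine ⟨m, hm, fun x hx => ?_⟩
  rcases eq_or_ne x m with rfl | hne'
  · exact le_rfl
  · rcases hs (Finset.mem_coe.mpr hx) (Finset.mem_coe.mpr hm) hne' with h | h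
    · exact absurd (lt_of_le_of_ne h hne') (fun hlt : x < m => not_le_of_gt hlt (hmin hx hlt.le))
    · exact h

end Chains

def OC (P : Type*) [PartialOrder P] [OrderBot P] : Set (Finset {x : P // x ≠ ⊥}) :=
  {F | IsChain (· ≤ ·) (↑F : Set {x : P // x ≠ ⊥})}

theorem mem_OC {P : Type*} [PartialOrder P] [OrderBot P] {F : Finset {x : P // x ≠ ⊥}} :
    F ∈ OC P ↔ IsChain (· ≤ ·) (↑F : Set {x : P // x ≠ ⊥}) := Iff.rfl

section OC

variable {P : Type*} [Fintype P] [DecidableEq P] [PartialOrder P] [OrderBot P]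
  {rk : P → ℕ} {d : ℕ}

local notation "V" => {x : P // x ≠ ⊥}

lemma sp_exists_max (a : P) : ∃ m, a ≤ m ∧ IsMax m := by
  obtain ⟨m, hm, hmax⟩ := Finite.exists_le_maximal (p := fun _ : P => True) trivial
  exact ⟨m, hm, fun y hy => hmax.2 trivial hy⟩

lemma oc_singleton (v : V) : ({v} : Finset V) ∈ OC P := by
  rw [mem_OC, Finset.coe_singleton]
  exact Set.subsingleton_singleton.isChain

lemma oc_injOn (hSP : IsSimplicialPoset P rk) {F : Finset V} (hF : F ∈ OC P) :
    Set.InjOn (fun σ : V => rk σ.1) ↑F := by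
  have hFc : IsChain (· ≤ ·) (↑F : Set V) := hF
  intro x hx y hy hxy
  by_contra hne
  simp only at hxy
  rcases hFc hx hy hne with h | h
  · exact absurd hxy (Nat.ne_of_lt (sp_rk_lt hSP (Subtype.coe_lt_coe.mpr (lt_of_le_of_ne h hne))))
  · exact absurd hxy.symm
      (Nat.ne_of_lt (sp_rk_lt hSP (Subtype.coe_lt_coe.mpr (lt_of_le_of_ne h (Ne.symm hne)))))

lemma oc_card_le (hSP : IsSimplicialPoset P rk) (hrk : PosetRank rk d)
    {F : Finset V} (hF : F ∈ OC P) : F.card ≤ d := by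
  classical
  have himg : F.image (fun σ : V => rk σ.1) ⊆ Finset.Icc 1 d := by
    intro j hj
    obtain ⟨x, hx, rfl⟩ := Finset.mem_image.mp hj
    exact Finset.mem_Icc.mpr ⟨sp_rk_pos hSP x.2, hrk.1 x.1⟩
  calc F.card = (F.image (fun σ : V => rk σ.1)).card :=
        (Finset.card_image_of_injOn (oc_injOn hSP hF)).symm
    _ ≤ (Finset.Icc 1 d).card := Finset.card_le_card himg
    _ = d := by rw [Nat.card_Icc]; omega
    
lemma oc_exists_vertex (hSP : IsSimplicialPoset P rk)
    (hi : PosetPure rk d) {F : Finset V} (hF : F ∈ OC P) {j : ℕ}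
    (h1 : 1 ≤ j) (h2 : j ≤ d) (hj : ∀ x ∈ F, rk x.1 ≠ j) :
    ∃ z : V, rk z.1 = j ∧ ({z} : Finset V) ∈ link (OC P) F := by
  have hFc : IsChain (· ≤ ·) (↑F : Set V) := hF
  classical
  set A := F.filter (fun x => rk x.1 < j) with hA
  set B := F.filter (fun x => j < rk x.1) with hB
  have hABmem : ∀ x ∈ F, x ∈ A ∨ x ∈ B := by
    intro x hx
    rcases lt_trichotomy (rk x.1) j with h | h | h
    · left; simp [hA, hx, h]
    · exact absurd h (hj x hx)
    · right; simp [hB, hx, h]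
  obtain ⟨a, ha1, ha2, ha3⟩ :
      ∃ a : P, rk a < j ∧ (∀ x ∈ A, x.1 ≤ a) ∧ (∀ x ∈ B, a ≤ x.1) := by
    by_cases hne : A.Nonempty
    · obtain ⟨m, hmA, hm⟩ :=
        chain_max (hFc.mono (Finset.coe_subset.mpr (Finset.filter_subset _ F))) hne
      have hmF : m ∈ F := Finset.filter_subset _ F hmA
      have hmj : rk m.1 < j := (Finset.mem_filter.mp hmA).2
      refine ⟨m.1, hmj, fun x hx => Subtype.coe_le_coe.mpr (hm x hx), fun x hx => ?_⟩
      have hxF : x ∈ F := Finset.filter_subset _ F hx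
      have hxj : j < rk x.1 := (Finset.mem_filter.mp hx).2
      rcases eq_or_ne m x with rfl | hne'
      · omega
      · rcases hFc (Finset.mem_coe.mpr hmF) (Finset.mem_coe.mpr hxF) hne' with h | h
        · exact Subtype.coe_le_coe.mpr h
        · exact absurd (sp_rk_le hSP (Subtype.coe_le_coe.mpr h)) (by omega)
    · exact ⟨⊥, by rw [sp_rk_bot hSP]; omega, fun x hx => absurd ⟨x, hx⟩ hne,
        fun x _ => bot_le⟩
  obtain ⟨b, hab, hjb, hb2⟩ : ∃ b : P, a ≤ b ∧ j ≤ rk b ∧ ∀ x ∈ B, b ≤ x.1 := by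
    by_cases hne : B.Nonempty
    · obtain ⟨m, hmB, hm⟩ :=
        chain_min (hFc.mono (Finset.coe_subset.mpr (Finset.filter_subset _ F))) hne
      have hmj : j < rk m.1 := (Finset.mem_filter.mp hmB).2
      exact ⟨m.1, ha3 m hmB, hmj.le, fun x hx => Subtype.coe_le_coe.mpr (hm x hx)⟩
    · obtain ⟨m, ham, hmax⟩ := sp_exists_max a
      refine ⟨m, ham, ?_, fun x hx => absurd ⟨x, hx⟩ hne⟩
      rw [hi m hmax]; omega
  obtain ⟨z, haz, hzb, hz⟩ := sp_between hSP hab (le_of_lt ha1) hjb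
  have hzbot : z ≠ ⊥ := sp_ne_bot hSP (by omega)
  have hznF : (⟨z, hzbot⟩ : V) ∉ F := fun hmem => hj _ hmem hz
  have hcompz : ∀ x ∈ F, x.1 ≤ z ∨ z ≤ x.1 := fun x hx =>
    (hABmem x hx).elim (fun h => Or.inl ((ha2 x h).trans haz))
      (fun h => Or.inr (hzb.trans (hb2 x h)))
  refine ⟨⟨z, hzbot⟩, hz, oc_singleton _, Finset.disjoint_singleton_right.mpr hznF, ?_⟩
  intro p hp q hq hpq
  simp only [Finset.coe_union, Finset.coe_singleton, Set.mem_union,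
    Set.mem_singleton_iff] at hp hq
  rcases hp with hp | rfl <;> rcases hq with hq | rfl
  · exact hFc hp hq hpq
  · exact (hcompz p hp).imp (fun h => h) (fun h => h)
  · exact (hcompz q hq).symm.imp (fun h => h) (fun h => h)
  · exact absurd rfl hpq

lemma oc_edge {F : Finset V} {v w : V}
    (hv : ({v} : Finset V) ∈ link (OC P) F) (hw : ({w} : Finset V) ∈ link (OC P) F)
    (hcomp : v ≤ w ∨ w ≤ v) : ({v, w} : Finset V) ∈ link (OC P) F := by
  have hvF : v ∉ F := Finset.disjoint_singleton_right.mp hv.2.1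
  have hwF : w ∉ F := Finset.disjoint_singleton_right.mp hw.2.1
  have hFv : IsChain (· ≤ ·) (↑(F ∪ {v}) : Set V) := hv.2.2
  have hFw : IsChain (· ≤ ·) (↑(F ∪ {w}) : Set V) := hw.2.2
  refine ⟨?_, ?_, ?_⟩
  · intro p hp q hq hpq
    simp only [Finset.coe_insert, Finset.coe_singleton, Set.mem_insert_iff,
      Set.mem_singleton_iff] at hp hq
    rcases hp with rfl | rfl <;> rcases hq with rfl | rfl
    · exact absurd rfl hpq
    · exact hcomp
    · exact hcomp.symm
    · exact absurd rfl hpq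
  · rw [Finset.disjoint_right]
    intro p hp
    simp only [Finset.mem_insert, Finset.mem_singleton] at hp
    rcases hp with rfl | rfl
    · exact hvF
    · exact hwF
  · have key : ∀ x : V, x ∈ (↑F : Set V) ∨ x = v ∨ x = w →
        ∀ y : V, y ∈ (↑F : Set V) ∨ y = v ∨ y = w → x ≠ y → x ≤ y ∨ y ≤ x := by
      intro x hx y hy hxy
      rcases hx with hx | rfl | rfl <;> rcases hy with hy | rfl | rfl
      · exact hFv (by simp [hx]) (by simp [hy]) hxy
      · exact hFv (by simp [hx]) (by simp) hxy
      · exact hFw (by simp [hx]) (by simp) hxy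
      · exact hFv (by simp) (by simp [hy]) hxy
      · exact absurd rfl hxy
      · exact hcomp
      · exact hFw (by simp) (by simp [hy]) hxy
      · exact hcomp.symm
      · exact absurd rfl hxy
    intro p hp q hq hpq
    simp only [Finset.coe_union, Finset.coe_insert, Finset.coe_singleton, Set.mem_union,
      Set.mem_insert_iff, Set.mem_singleton_iff] at hp hq
    exact key p hp q hq hpq

end OC

section OC2

variable {P : Type*} [Fintype P] [DecidableEq P] [PartialOrder P] [OrderBot P]
  {rk : P → ℕ} {d : ℕ}

local notation "V" => {x : P // x ≠ ⊥}

lemma oc_conn_above (hSP : IsSimplicialPoset P rk) (hiii : PosetLinksConn rk d)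
    {F : Finset V} {τ : P} (hτ : rk τ < d - 1)
    (hvert : ∀ z : V, τ < z.1 → ({z} : Finset V) ∈ link (OC P) F)
    {v w : V} (hv : τ < v.1) (hw : τ < w.1) :
    Relation.ReflTransGen (fun a b : V => ({a, b} : Finset V) ∈ link (OC P) F) v w := by
  set R := fun a b : V => ({a, b} : Finset V) ∈ link (OC P) F with hR
  have edge : ∀ (a b : V), τ < a.1 → τ < b.1 → (a.1 ≤ b.1 ∨ b.1 ≤ a.1) → R a b :=
    fun a b ha hb hc => oc_edge (hvert a ha) (hvert b hb) hc
  have hrv := sp_rk_lt hSP hv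
  have hrw := sp_rk_lt hSP hw
  obtain ⟨z1, hτz1, hz1v, hz1r⟩ := sp_between hSP hv.le (Nat.le_succ _) hrv
  obtain ⟨z2, hτz2, hz2w, hz2r⟩ := sp_between hSP hw.le (Nat.le_succ _) hrw
  have hτz1' : τ < z1 := lt_of_le_of_ne hτz1 (fun h => by rw [← h] at hz1r; omega)
  have hτz2' : τ < z2 := lt_of_le_of_ne hτz2 (fun h => by rw [← h] at hz2r; omega)
  have hz1b : z1 ≠ ⊥ := sp_ne_bot hSP (by omega)
  have hz2b : z2 ≠ ⊥ := sp_ne_bot hSP (by omega)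
  have key : ∀ c : P, Relation.ReflTransGen
      (fun a b : P => τ < a ∧ τ < b ∧ rk a = rk τ + 1 ∧ rk b = rk τ + 1 ∧
        ∃ e : P, a ≤ e ∧ b ≤ e ∧ rk e = rk τ + 2) z1 c →
      ∀ hc : c ≠ ⊥, Relation.ReflTransGen R (⟨z1, hz1b⟩ : V) ⟨c, hc⟩ := by
    intro c h
    induction h with
    | refl => intro hc; exact Relation.ReflTransGen.refl
    | @tail b c hab hbc ih =>
      intro hc
      obtain ⟨hτb, hτc, hrb, hrc, e, hbe, hce, hre⟩ := hbc
      have hbbot : b ≠ ⊥ := sp_ne_bot hSP (by omega)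
      have hebot : e ≠ ⊥ := sp_ne_bot hSP (by omega)
      have hτe : τ < e := lt_of_lt_of_le hτb hbe
      exact ((ih hbbot).tail (edge ⟨b, hbbot⟩ ⟨e, hebot⟩ hτb hτe (Or.inl hbe))).tail
        (edge ⟨e, hebot⟩ ⟨c, hc⟩ hτe hτc (Or.inr hce))
  have mid := key z2 (hiii τ hτ z1 z2 hτz1' hz1r hτz2' hz2r) hz2b
  exact ((Relation.ReflTransGen.single (edge v ⟨z1, hz1b⟩ hv hτz1' (Or.inr hz1v))).trans
    mid).tail (edge ⟨z2, hz2b⟩ w hτz2' hw (Or.inl hz2w))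

lemma oc_linksConn (hSP : IsSimplicialPoset P rk) (hrk : PosetRank rk d) (hd : 2 ≤ d)
    (hi : PosetPure rk d) (hiii : PosetLinksConn rk d) : LinksConn (OC P) d := by
  classical
  intro F hF hcard v w hv hw
  set R := fun a b : V => ({a, b} : Finset V) ∈ link (OC P) F with hR
  have step : ∀ a b : V, ({a, b} : Finset V) ∈ link (OC P) F → R a b := fun _ _ h => h
  have hFc : IsChain (· ≤ ·) (↑F : Set V) := hF
  by_cases hcomp : v ≤ w ∨ w ≤ v
  · exact Relation.ReflTransGen.single (step _ _ (oc_edge hv hw hcomp))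
  push_neg at hcomp
  obtain ⟨hc1, hc2⟩ := hcomp
  have hvF : v ∉ F := Finset.disjoint_singleton_right.mp hv.2.1
  have hwF : w ∉ F := Finset.disjoint_singleton_right.mp hw.2.1
  have hvertcomp : ∀ (u : V), ({u} : Finset V) ∈ link (OC P) F →
      ∀ x ∈ F, x ≤ u ∨ u ≤ x := by
    intro u hu x hx
    have huF : u ∉ F := Finset.disjoint_singleton_right.mp hu.2.1
    have hch : IsChain (· ≤ ·) (↑(F ∪ {u}) : Set V) := hu.2.2
    have hxu : x ≠ u := fun h => huF (h ▸ hx)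
    exact hch (by simp [hx]) (by simp) hxu
  have hsame : ∀ (u u' : V), ({u} : Finset V) ∈ link (OC P) F →
      ({u'} : Finset V) ∈ link (OC P) F → ¬(u ≤ u' ∨ u' ≤ u) →
      ∀ x ∈ F, x < u → x < u' := by
    intro u u' hu hu' hcmp x hx hxu
    rcases hvertcomp u' hu' x hx with h | h
    · exact lt_of_le_of_ne h
        (fun hh => (Finset.disjoint_singleton_right.mp hu'.2.1) (hh ▸ hx))
    · exact absurd (Or.inr (h.trans hxu.le)) hcmp
  have hgw : ∀ x ∈ F, (x < w ↔ x < v) := by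
    intro x hx
    constructor
    · exact hsame w v hw hv (fun h => h.elim hc2 hc1) x hx
    · exact hsame v w hv hw (fun h => h.elim hc1 hc2) x hx
  by_cases hoth : ∃ u : V, ({u} : Finset V) ∈ link (OC P) F ∧ ∃ x ∈ F, ¬(x < u ↔ x < v)
  · obtain ⟨u, hu, x, hx, hne⟩ := hoth
    have hcuv : u ≤ v ∨ v ≤ u := by
      by_contra hcmp
      exact hne ⟨fun h => hsame u v hu hv hcmp x hx h,
        fun h => hsame v u hv hu (fun hh => hcmp hh.symm) x hx h⟩
    have hcuw : u ≤ w ∨ w ≤ u := by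
      by_contra hcmp
      exact hne ⟨fun h => (hgw x hx).mp (hsame u w hu hw hcmp x hx h),
        fun h => hsame w u hw hu (fun hh => hcmp hh.symm) x hx ((hgw x hx).mpr h)⟩
    exact (Relation.ReflTransGen.single (step _ _ (oc_edge hv hu hcuv.symm))).tail
      (step _ _ (oc_edge hu hw hcuw))
  push_neg at hoth
  set Bel := F.filter (fun x => x < v) with hBel
  set Abv := F.filter (fun x => v < x) with hAbv
  have hsplitF : ∀ x ∈ F, x ∈ Bel ∨ x ∈ Abv := by
    intro x hx
    have hxv : x ≠ v := fun h => hvF (h ▸ hx)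
    rcases hvertcomp v hv x hx with h | h
    · left; exact Finset.mem_filter.mpr ⟨hx, lt_of_le_of_ne h hxv⟩
    · right; exact Finset.mem_filter.mpr ⟨hx, lt_of_le_of_ne h (Ne.symm hxv)⟩
  obtain ⟨a, hav, ha2, ha3⟩ : ∃ a : P, a < v.1 ∧ (∀ x ∈ Bel, x.1 ≤ a) ∧
      (∀ z : V, (∀ x ∈ F, x < z ↔ x < v) → a < z.1) := by
    by_cases hne : Bel.Nonempty
    · obtain ⟨m, hmB, hm⟩ :=
        chain_max (hFc.mono (Finset.coe_subset.mpr (Finset.filter_subset _ F))) hne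
      have hmv : m < v := (Finset.mem_filter.mp hmB).2
      have hmF : m ∈ F := Finset.filter_subset _ F hmB
      refine ⟨m.1, Subtype.coe_lt_coe.mpr hmv, fun x hx => Subtype.coe_le_coe.mpr (hm x hx),
        fun z hz => Subtype.coe_lt_coe.mpr ((hz m hmF).mpr hmv)⟩
    · refine ⟨⊥, bot_lt_iff_ne_bot.mpr v.2, fun x hx => absurd ⟨x, hx⟩ hne,
        fun z _ => bot_lt_iff_ne_bot.mpr z.2⟩
  have himgcard : (F.image (fun x : V => rk x.1)).card = F.card :=
    Finset.card_image_of_injOn (oc_injOn hSP hF)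
  have hIa : Finset.Icc 1 (rk a) ⊆ F.image (fun x : V => rk x.1) := by
    intro j hj
    rw [Finset.mem_Icc] at hj
    by_contra hjm
    have hjF : ∀ x ∈ F, rk x.1 ≠ j := fun x hx h => hjm (Finset.mem_image.mpr ⟨x, hx, h⟩)
    obtain ⟨z, hzr, hzl⟩ := oc_exists_vertex hSP hi hF hj.1 (hj.2.trans (hrk.1 a)) hjF
    have h1 := sp_rk_lt hSP (ha3 z (hoth z hzl))
    omega
  have hra : rk a ≤ F.card := by
    have h1 := Finset.card_le_card hIa
    rw [Nat.card_Icc, himgcard] at h1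
    omega
  have haw : a < w.1 := ha3 w hgw
  have hrav := sp_rk_lt hSP hav
  by_cases hAne : Abv.Nonempty
  · -- bounded gap
    obtain ⟨b, hbA, hbmin⟩ :=
      chain_min (hFc.mono (Finset.coe_subset.mpr (Finset.filter_subset _ F))) hAne
    have hvb : v < b := (Finset.mem_filter.mp hbA).2
    have hbF : b ∈ F := Finset.filter_subset _ F hbA
    have hvb' : v.1 < b.1 := Subtype.coe_lt_coe.mpr hvb
    have hrvb := sp_rk_lt hSP hvb'
    have hgap : ∀ z : V, ({z} : Finset V) ∈ link (OC P) F → a < z.1 ∧ z.1 < b.1 := by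
      intro z hz
      have hzprop := hoth z hz
      refine ⟨ha3 z hzprop, ?_⟩
      have hnbz : ¬ b < z := fun h => absurd ((hzprop b hbF).mp h) (asymm hvb)
      have hzF : z ∉ F := Finset.disjoint_singleton_right.mp hz.2.1
      have hzb : z ≠ b := fun h => hzF (h ▸ hbF)
      rcases hvertcomp z hz b hbF with h | h
      · exact absurd (lt_of_le_of_ne h (Ne.symm hzb)) hnbz
      · exact Subtype.coe_lt_coe.mpr (lt_of_le_of_ne h hzb)
    have hvertchar : ∀ z : V, a < z.1 → z.1 < b.1 → ({z} : Finset V) ∈ link (OC P) F := by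
      intro z hza hzb
      have hzF : z ∉ F := by
        intro hmem
        rcases hsplitF z hmem with h | h
        · exact absurd (lt_of_le_of_lt (ha2 z h) hza) (lt_irrefl _)
        · exact absurd (lt_of_le_of_lt (Subtype.coe_le_coe.mpr (hbmin z h)) hzb) (lt_irrefl _)
      have hcompz : ∀ x ∈ F, x ≤ z ∨ z ≤ x := by
        intro x hx
        rcases hsplitF x hx with h | h
        · exact Or.inl (Subtype.coe_le_coe.mp ((ha2 x h).trans hza.le))
        · exact Or.inr (Subtype.coe_le_coe.mp (hzb.le.trans (Subtype.coe_le_coe.mpr (hbmin x h))))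
      refine ⟨oc_singleton z, Finset.disjoint_singleton_right.mpr hzF, ?_⟩
      intro p hp q hq hpq
      simp only [Finset.coe_union, Finset.coe_singleton, Set.mem_union,
        Set.mem_singleton_iff] at hp hq
      rcases hp with hp | rfl <;> rcases hq with hq | rfl
      · exact hFc hp hq hpq
      · exact (hcompz p hp).imp (fun h => h) (fun h => h)
      · exact ((hcompz q hq).symm).imp (fun h => h) (fun h => h)
      · exact absurd rfl hpq
    have hsub : Finset.Icc 1 d ⊆
        F.image (fun x : V => rk x.1) ∪ Finset.Icc (rk a + 1) (rk b.1 - 1) := by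
      intro j hj
      rw [Finset.mem_Icc] at hj
      by_cases hjm : j ∈ F.image (fun x : V => rk x.1)
      · exact Finset.mem_union_left _ hjm
      · have hjF : ∀ x ∈ F, rk x.1 ≠ j := fun x hx h => hjm (Finset.mem_image.mpr ⟨x, hx, h⟩)
        obtain ⟨z, hzr, hzl⟩ := oc_exists_vertex hSP hi hF hj.1 hj.2 hjF
        obtain ⟨h1, h2⟩ := hgap z hzl
        have h3 := sp_rk_lt hSP h1
        have h4 := sp_rk_lt hSP h2
        exact Finset.mem_union_right _ (Finset.mem_Icc.mpr ⟨by omega, by omega⟩)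
    have hab3 : rk a + 3 ≤ rk b.1 := by
      have h1 := Finset.card_le_card hsub
      have h2 := Finset.card_union_le (F.image (fun x : V => rk x.1))
        (Finset.Icc (rk a + 1) (rk b.1 - 1))
      rw [Nat.card_Icc] at h1 h2
      omega
    obtain ⟨z1, haz1, hz1v, hz1r⟩ := sp_between hSP hav.le (Nat.le_succ _) hrav
    obtain ⟨z2, haz2, hz2w, hz2r⟩ := sp_between hSP haw.le (Nat.le_succ _) (sp_rk_lt hSP haw)
    have hz1bot : z1 ≠ ⊥ := sp_ne_bot hSP (by omega)
    have hz2bot : z2 ≠ ⊥ := sp_ne_bot hSP (by omega)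
    have haz1' : a < z1 := lt_of_le_of_ne haz1 (fun h => by rw [← h] at hz1r; omega)
    have haz2' : a < z2 := lt_of_le_of_ne haz2 (fun h => by rw [← h] at hz2r; omega)
    have hz1b : z1 < b.1 := lt_of_le_of_lt hz1v hvb'
    have hz2b : z2 < b.1 := lt_of_le_of_lt hz2w (hgap w hw).2
    have hv1 : ({(⟨z1, hz1bot⟩ : V)} : Finset V) ∈ link (OC P) F := hvertchar _ haz1' hz1b
    have hv2 : ({(⟨z2, hz2bot⟩ : V)} : Finset V) ∈ link (OC P) F := hvertchar _ haz2' hz2b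
    by_cases hz12 : z1 = z2
    · subst hz12
      exact (Relation.ReflTransGen.single (step _ _ (oc_edge hv hv1 (Or.inr hz1v)))).tail
        (step _ _ (oc_edge hv1 hw (Or.inl hz2w)))
    · obtain ⟨e, he1, he2, heb, her⟩ := sp_join hSP haz1 haz2 hz1b.le hz2b.le hz1r hz2r hz12
      have hebot : e ≠ ⊥ := sp_ne_bot hSP (by omega)
      have haze : a < e := lt_of_lt_of_le haz1' he1
      have heb' : e < b.1 := lt_of_le_of_ne heb (fun h => by rw [h] at her; omega)
      have hve : ({(⟨e, hebot⟩ : V)} : Finset V) ∈ link (OC P) F := hvertchar _ haze heb'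
      exact (((Relation.ReflTransGen.single (step _ _ (oc_edge hv hv1 (Or.inr hz1v)))).tail
        (step _ _ (oc_edge hv1 hve (Or.inl he1)))).tail
        (step _ _ (oc_edge hve hv2 (Or.inr he2)))).tail (step _ _ (oc_edge hv2 hw (Or.inl hz2w)))
  · -- top gap
    have hvertall : ∀ z : V, a < z.1 → ({z} : Finset V) ∈ link (OC P) F := by
      intro z hz
      have hzF : z ∉ F := by
        intro hmem
        rcases hsplitF z hmem with h | h
        · exact absurd (lt_of_le_of_lt (ha2 z h) hz) (lt_irrefl _)
        · exact absurd h (fun hh => hAne ⟨z, hh⟩)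
      have hcompz : ∀ x ∈ F, x ≤ z := by
        intro x hx
        rcases hsplitF x hx with h | h
        · exact Subtype.coe_le_coe.mp ((ha2 x h).trans hz.le)
        · exact absurd h (fun hh => hAne ⟨x, hh⟩)
      refine ⟨oc_singleton z, Finset.disjoint_singleton_right.mpr hzF, ?_⟩
      intro p hp q hq hpq
      simp only [Finset.coe_union, Finset.coe_singleton, Set.mem_union,
        Set.mem_singleton_iff] at hp hq
      rcases hp with hp | rfl <;> rcases hq with hq | rfl
      · exact hFc hp hq hpq
      · exact Or.inl (hcompz p hp)
      · exact Or.inr (hcompz q hq)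
      · exact absurd rfl hpq
    exact oc_conn_above hSP hiii (by omega) hvertall hav haw

end OC2

section Main

variable {P : Type*} [Fintype P] [DecidableEq P] [PartialOrder P] [OrderBot P]
  {rk : P → ℕ} {d : ℕ}

local notation "V" => {x : P // x ≠ ⊥}

lemma oc_pure (hSP : IsSimplicialPoset P rk) (hrk : PosetRank rk d)
    (hi : PosetPure rk d) : IsPure (OC P) d := by
  classical
  rintro F ⟨hF, hmax⟩
  have hnov : ∀ z : V, ({z} : Finset V) ∉ link (OC P) F := by
    rintro z ⟨h0, hdisj, hunion⟩
    have h2 := hmax _ hunion Finset.subset_union_left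
    have hzF : z ∈ F := by
      rw [← h2]
      exact Finset.mem_union_right _ (Finset.mem_singleton_self z)
    exact Finset.disjoint_singleton_right.mp hdisj hzF
  have hall : ∀ j, 1 ≤ j → j ≤ d → ∃ x ∈ F, rk x.1 = j := by
    intro j h1 h2
    by_contra h
    push_neg at h
    obtain ⟨z, _, hzl⟩ := oc_exists_vertex hSP hi hF h1 h2
      (fun x hx => h x hx)
    exact hnov z hzl
  have himg : F.image (fun x : V => rk x.1) = Finset.Icc 1 d := by
    apply Finset.Subset.antisymm
    · intro j hj
      obtain ⟨x, hx, rfl⟩ := Finset.mem_image.mp hj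
      exact Finset.mem_Icc.mpr ⟨sp_rk_pos hSP x.2, hrk.1 x.1⟩
    · intro j hj
      rw [Finset.mem_Icc] at hj
      obtain ⟨x, hx, hxj⟩ := hall j hj.1 hj.2
      exact Finset.mem_image.mpr ⟨x, hx, hxj⟩
  calc F.card = (F.image (fun x : V => rk x.1)).card :=
        (Finset.card_image_of_injOn (oc_injOn hSP hF)).symm
    _ = (Finset.Icc 1 d).card := by rw [himg]
    _ = d := by rw [Nat.card_Icc]; omega

lemma oc_exists_facet : ∃ F, IsFacet (OC P) F := by
  obtain ⟨F, hF, hmax⟩ := Set.Finite.exists_maximalFor Finset.card (OC P)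
    (Set.toFinite _) ⟨∅, by rw [mem_OC, Finset.coe_empty]; exact IsChain.empty⟩
  refine ⟨F, hF, fun G hG hFG => ?_⟩
  exact (Finset.eq_of_subset_of_card_le hFG
    (hmax hG (Finset.card_le_card hFG))).symm

end Main

/-- If `P` is a simplicial poset of rank `d ≥ 2` satisfying
properties (i)–(iii), then the order complex `Δ(P̄)` of `P̄ = P \ {⊥}` (the simplicial
complex whose vertices are the elements of `P̄` and whose faces are the chains of `P̄`)
is a `(d-1)`-dimensional simplicial complex satisfying properties (I)–(III): it is
pure, it is balanced with the coloring assigning to each vertex `σ` its rank `rk σ`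
(a color in `{1, …, d}`), and the link of every chain with fewer than `d - 1` elements
is connected. -/
theorem orderComplex_satisfies_I_II_III {P : Type*} [Fintype P] [DecidableEq P]
    [PartialOrder P] [OrderBot P] (rk : P → ℕ) (d : ℕ) (hd : 2 ≤ d) (κ : P → Fin d)
    (hSP : IsSimplicialPoset P rk) (hrk : PosetRank rk d)
    (hi : PosetPure rk d) (hii : PosetBalanced rk κ) (hiii : PosetLinksConn rk d) :
    ∀ Δ : Set (Finset {x : P // x ≠ ⊥}),
      Δ = {F : Finset {x : P // x ≠ ⊥} | IsChain (· ≤ ·) (↑F : Set {x : P // x ≠ ⊥})} →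
      IsComplex Δ ∧ HasDim Δ d ∧
      -- (I): the order complex is pure
      IsPure Δ d ∧
      -- (II): the order complex is balanced with coloring `σ ↦ rk σ`
      (∀ F ∈ Δ, Set.InjOn (fun σ : {x : P // x ≠ ⊥} => rk σ.1) ↑F) ∧
      (∀ σ : {x : P // x ≠ ⊥}, 1 ≤ rk σ.1 ∧ rk σ.1 ≤ d) ∧
      -- (III): links of faces with fewer than `d - 1` vertices are connected
      LinksConn Δ d := by
  intro Δ hΔ
  have hΔ' : Δ = OC P := hΔ
  subst hΔ'
  refine ⟨⟨fun F hF G hGF => IsChain.mono (Finset.coe_subset.mpr hGF) hF,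
    fun v => oc_singleton v⟩,
    ⟨fun F hF => oc_card_le hSP hrk hF, ?_⟩,
    oc_pure hSP hrk hi,
    fun F hF => oc_injOn hSP hF,
    fun σ => ⟨sp_rk_pos hSP σ.2, hrk.1 σ.1⟩,
    oc_linksConn hSP hrk hd hi hiii⟩
  obtain ⟨F, hfacet⟩ := oc_exists_facet (P := P)
  exact ⟨F, hfacet.1, oc_pure hSP hrk hi F hfacet⟩
end
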